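/- arXiv:1703.02422 — 3 statements merged into one kernel-verified Lean document; each statement's English description precedes it below -/
import Mathlib

section
/- Let A, Ã = A + E ∈ ℂ^{n×n} with A normal, having eigenvalues {λ_i} and {λ̃_i} respectively. Then there exists a permutation π of {1,…,n} such that ∑_{i=1}^n |λ̃_{π(i)} − λ_i|² ≤ ‖E‖_F² + (n−1)δ(E)², where δ(E)² = ‖E‖_F² − (1/n)|tr(E)|². Equivalently, the bound is n‖E‖_F² − ((n−1)/n)|tr(E)|². -/
open Matrix BigOperators Polynomial

noncomputable def frobSq {n : ℕ} (M : Matrix (Fin n) (Fin n) ℂ) : ℝ :=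
  ∑ i, ∑ j, ‖M i j‖ ^ 2

namespace SunAux


variable {n : ℕ}

noncomputable def fro (M : Matrix (Fin n) (Fin n) ℂ) : ℝ :=
  ∑ i, ∑ j, Complex.normSq (M i j)

lemma frobSq_eq_fro (M : Matrix (Fin n) (Fin n) ℂ) : frobSq M = fro M := by
  simp [frobSq, fro, Complex.sq_norm]

lemma fro_nonneg (M : Matrix (Fin n) (Fin n) ℂ) : 0 ≤ fro M := by
  refine Finset.sum_nonneg fun i _ => Finset.sum_nonneg fun j _ => Complex.normSq_nonneg _

-- diagonal entries of Mᴴ * M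
lemma conjTranspose_mul_diag (M : Matrix (Fin n) (Fin n) ℂ) (j : Fin n) :
    (Mᴴ * M) j j = ∑ i, (Complex.normSq (M i j) : ℂ) := by
  simp [Matrix.mul_apply, conjTranspose_apply, Complex.normSq_eq_conj_mul_self]

lemma mul_conjTranspose_diag (M : Matrix (Fin n) (Fin n) ℂ) (i : Fin n) :
    (M * Mᴴ) i i = ∑ j, (Complex.normSq (M i j) : ℂ) := by
  simp [Matrix.mul_apply, conjTranspose_apply, Complex.mul_conj]

lemma fro_eq_trace (M : Matrix (Fin n) (Fin n) ℂ) :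
    (fro M : ℂ) = (Mᴴ * M).trace := by
  rw [Matrix.trace]
  simp only [Matrix.diag]
  rw [fro]
  push_cast
  rw [Finset.sum_comm]
  refine Finset.sum_congr rfl fun j _ => ?_
  rw [conjTranspose_mul_diag]

lemma fro_unitary_conj {U M : Matrix (Fin n) (Fin n) ℂ} (hU : Uᴴ * U = 1) :
    fro (Uᴴ * M * U) = fro M := by
  have hU' : U * Uᴴ = 1 := mul_eq_one_comm.mp hU
  have h1 : ((fro (Uᴴ * M * U) : ℂ)) = (fro M : ℂ) := by
    rw [fro_eq_trace, fro_eq_trace]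
    have : (Uᴴ * M * U)ᴴ = Uᴴ * Mᴴ * U := by
      simp [Matrix.conjTranspose_mul, Matrix.mul_assoc]
    rw [this]
    have : Uᴴ * Mᴴ * U * (Uᴴ * M * U) = Uᴴ * (Mᴴ * M) * U := by
      rw [Matrix.mul_assoc (Uᴴ * Mᴴ) U _]
      rw [show U * (Uᴴ * M * U) = (U * Uᴴ) * M * U by simp [Matrix.mul_assoc]]
      rw [hU']
      simp [Matrix.mul_assoc]
    rw [this]
    rw [Matrix.trace_mul_cycle]
    rw [show U * Uᴴ * (Mᴴ * M) = Mᴴ * M by rw [hU']; simp]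
  exact_mod_cast h1



variable {n : ℕ}

/-- extend a matrix by a 1 in the top-left corner -/
noncomputable def ext1 (U : Matrix (Fin n) (Fin n) ℂ) : Matrix (Fin (n+1)) (Fin (n+1)) ℂ :=
  Matrix.of fun i j =>
    Fin.cases (Fin.cases (1:ℂ) (fun _ => 0) j) (fun i' => Fin.cases 0 (fun j' => U i' j') j) i

@[simp] lemma ext1_zero_zero (U : Matrix (Fin n) (Fin n) ℂ) : ext1 U 0 0 = 1 := rfl
@[simp] lemma ext1_zero_succ (U : Matrix (Fin n) (Fin n) ℂ) (j : Fin n) :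
    ext1 U 0 j.succ = 0 := rfl
@[simp] lemma ext1_succ_zero (U : Matrix (Fin n) (Fin n) ℂ) (i : Fin n) :
    ext1 U i.succ 0 = 0 := rfl
@[simp] lemma ext1_succ_succ (U : Matrix (Fin n) (Fin n) ℂ) (i j : Fin n) :
    ext1 U i.succ j.succ = U i j := rfl

lemma ext1_conjTranspose (U : Matrix (Fin n) (Fin n) ℂ) : (ext1 U)ᴴ = ext1 Uᴴ := by
  ext i j
  refine Fin.cases ?_ (fun i' => ?_) i <;> refine Fin.cases ?_ (fun j' => ?_) j <;>
    simp [Matrix.conjTranspose_apply]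

lemma ext1_mul (U V : Matrix (Fin n) (Fin n) ℂ) : ext1 U * ext1 V = ext1 (U * V) := by
  ext i j
  rw [Matrix.mul_apply, Fin.sum_univ_succ]
  refine Fin.cases ?_ (fun i' => ?_) i <;> refine Fin.cases ?_ (fun j' => ?_) j <;>
    simp [Matrix.mul_apply]

lemma ext1_one : ext1 (1 : Matrix (Fin n) (Fin n) ℂ) = 1 := by
  ext i j
  refine Fin.cases ?_ (fun i' => ?_) i <;> refine Fin.cases ?_ (fun j' => ?_) j <;>
    simp [Matrix.one_apply, Fin.succ_ne_zero, (Fin.succ_ne_zero _).symm, Fin.succ_inj]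

/-- Schur triangulation -/
theorem schur : ∀ (n : ℕ) (M : Matrix (Fin n) (Fin n) ℂ),
    ∃ U : Matrix (Fin n) (Fin n) ℂ, Uᴴ * U = 1 ∧
      ∀ i j : Fin n, j < i → (Uᴴ * M * U) i j = 0 := by
  intro n
  induction n with
  | zero => exact fun M => ⟨1, by simp, fun i => i.elim0⟩
  | succ n IH =>
    intro M
    -- find a unit eigenvector
    obtain ⟨c, hc⟩ := Module.End.exists_eigenvalue (Matrix.toLin' M)
    obtain ⟨v, hv⟩ := hc.exists_hasEigenvector
    have hvne : v ≠ 0 := hv.2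
    have hMv : M *ᵥ v = c • v := by
      have := hv.apply_eq_smul
      rwa [Matrix.toLin'_apply] at this
    set E := EuclideanSpace ℂ (Fin (n+1))
    let v' : E := WithLp.toLp 2 v
    have hv'ne : v' ≠ 0 := by
      intro h
      exact hvne (congrArg WithLp.ofLp h)
    let r : ℂ := (‖v'‖ : ℂ)⁻¹
    let u : E := r • v'
    have hu_norm : ‖u‖ = 1 := by
      have : ‖v'‖ ≠ 0 := norm_ne_zero_iff.mpr hv'ne
      simp only [u, r, norm_smul]
      rw [norm_inv, Complex.norm_real, Real.norm_eq_abs, abs_of_nonneg (norm_nonneg _)]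
      field_simp
    have hMu : M *ᵥ (u : Fin (n+1) → ℂ) = c • (u : Fin (n+1) → ℂ) := by
      show M *ᵥ (r • v) = c • (r • v)
      rw [Matrix.mulVec_smul, hMv, smul_comm]
    -- extend to an orthonormal basis
    have hcard : Module.finrank ℂ E = Fintype.card (Fin (n+1)) := by
      simp [E]
    have hON : Orthonormal ℂ (({0} : Set (Fin (n+1))).restrict (fun _ => u)) := by
      rw [orthonormal_iff_ite]
      rintro ⟨i, hi⟩ ⟨j, hj⟩
      simp only [Set.mem_singleton_iff] at hi hj
      subst hi; subst hj
      simp [Set.restrict, inner_self_eq_norm_sq_to_K, hu_norm]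
    obtain ⟨b, hb⟩ := hON.exists_orthonormalBasis_extension_of_card_eq hcard
    have hb0 : b 0 = u := hb 0 rfl
    -- U1: columns are the basis vectors
    let U1 : Matrix (Fin (n+1)) (Fin (n+1)) ℂ := Matrix.of fun i j => (b j) i
    have hbij : ∀ i j : Fin (n+1), (∑ k, (starRingEnd ℂ) (b i k) * (b j k)) =
        if i = j then 1 else 0 := by
      intro i j
      have := orthonormal_iff_ite.mp b.orthonormal i j
      rw [← this, PiLp.inner_apply]
      simp [RCLike.inner_apply, mul_comm]
    have hU1 : U1ᴴ * U1 = 1 := by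
      ext i j
      rw [Matrix.mul_apply, Matrix.one_apply]
      simpa [U1, Matrix.conjTranspose_apply] using hbij i j
    set T1 := U1ᴴ * M * U1 with hT1
    have hT1col : ∀ i : Fin n, T1 i.succ 0 = 0 := by
      intro i
      have hcol : ∀ k, (M * U1) k 0 = c * u k := by
        intro k
        rw [Matrix.mul_apply]
        have : ∀ l, U1 l 0 = u l := fun l => by simp [U1, hb0]
        simp only [this]
        have := congrFun hMu k
        simpa [Matrix.mulVec, dotProduct, Pi.smul_apply, smul_eq_mul, mul_comm] using this
      rw [hT1, Matrix.mul_assoc, Matrix.mul_apply]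
      simp only [Matrix.conjTranspose_apply, U1, Matrix.of_apply]
      calc (∑ k, (starRingEnd ℂ) (b i.succ k) * (M * U1) k 0)
          = c * ∑ k, (starRingEnd ℂ) (b i.succ k) * (u k) := by
            rw [Finset.mul_sum]
            refine Finset.sum_congr rfl fun k _ => ?_
            rw [hcol k]; ring
        _ = 0 := by
            rw [show u.ofLp = (b 0).ofLp from congrArg WithLp.ofLp hb0.symm]
            rw [hbij i.succ 0]
            simp [Fin.succ_ne_zero]
    -- recurse
    obtain ⟨U2, hU2, hU2tri⟩ := IH (T1.submatrix Fin.succ Fin.succ)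
    set V := ext1 U2 with hV
    refine ⟨U1 * V, ?_, ?_⟩
    · rw [Matrix.conjTranspose_mul, Matrix.mul_assoc, ← Matrix.mul_assoc U1ᴴ U1 V, hU1,
        Matrix.one_mul, hV, ext1_conjTranspose, ext1_mul, hU2, ext1_one]
    · intro i j hij
      have hre : (U1 * V)ᴴ * M * (U1 * V) = Vᴴ * T1 * V := by
        rw [Matrix.conjTranspose_mul, hT1]
        noncomm_ring
      rw [hre]
      have hentry : (Vᴴ * T1 * V) i j =
          ∑ k, ∑ l, star (V k i) * (T1 k l * V l j) := by
        rw [Matrix.mul_assoc, Matrix.mul_apply]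
        refine Finset.sum_congr rfl fun k _ => ?_
        rw [Matrix.conjTranspose_apply, Matrix.mul_apply, Finset.mul_sum]
      rw [hentry]
      -- case analysis on j
      simp only [Complex.star_def] at hentry ⊢
      refine Fin.cases ?_ (fun j' => ?_) j hij <;> intro hij'
      · -- j = 0, so i = succ i'
        refine Fin.cases ?_ (fun i' => ?_) i hij' <;> intro hij''
        · exact absurd hij'' (lt_irrefl _)
        · refine Finset.sum_eq_zero fun k _ => ?_
          refine Fin.cases ?_ (fun k' => ?_) k
          · rw [Fin.sum_univ_succ]
            have h1 : V 0 (i'.succ) = 0 := by simp [hV]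
            simp [h1]
          · rw [Fin.sum_univ_succ]
            have h2 : ∀ l' : Fin n, V l'.succ 0 = 0 := fun l' => by simp [hV]
            have h3 : V (0 : Fin (n+1)) (0 : Fin (n+1)) = 1 := by simp [hV]
            simp [h2, h3, hT1col k']
      · -- j = succ j'
        refine Fin.cases ?_ (fun i' => ?_) i hij' <;> intro hij''
        · exact absurd hij'' (by simp [Fin.lt_iff_val_lt_val])
        · have hj'i' : j' < i' := by
            rwa [Fin.succ_lt_succ_iff] at hij''
          have := hU2tri i' j' hj'i'
          rw [Matrix.mul_assoc, Matrix.mul_apply] at this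
          calc (∑ k, ∑ l, (starRingEnd ℂ) (V k i'.succ) * (T1 k l * V l j'.succ))
              = ∑ k', ∑ l', (starRingEnd ℂ) (U2 k' i') * (T1 k'.succ l'.succ * U2 l' j') := by
                rw [Fin.sum_univ_succ]
                have : V 0 (i'.succ) = 0 := by simp [hV]
                rw [this]
                simp only [map_zero, zero_mul, Finset.sum_const_zero, zero_add]
                refine Finset.sum_congr rfl fun k' _ => ?_
                rw [Fin.sum_univ_succ]
                have : V 0 (j'.succ) = 0 := by simp [hV]
                rw [this]
                simp [hV]
            _ = 0 := by
                rw [← this]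
                refine Finset.sum_congr rfl fun k' _ => ?_
                rw [Matrix.conjTranspose_apply, Matrix.mul_apply, Finset.mul_sum]
                refine Finset.sum_congr rfl fun l' _ => ?_
                simp [Matrix.submatrix_apply, Complex.star_def]
  


variable {n : ℕ}

/-- row and column ℓ² masses agree on the diagonal for normal matrices -/
lemma normal_row_col {H : Matrix (Fin n) (Fin n) ℂ} (hH : H * Hᴴ = Hᴴ * H) (i : Fin n) :
    ∑ j, Complex.normSq (H i j) = ∑ j, Complex.normSq (H j i) := by
  have h1 : (H * Hᴴ) i i = (Hᴴ * H) i i := by rw [hH]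
  rw [mul_conjTranspose_diag, conjTranspose_mul_diag] at h1
  exact_mod_cast h1

/-- a normal upper triangular matrix is diagonal -/
lemma normal_triangular_diag {T : Matrix (Fin n) (Fin n) ℂ}
    (hT : ∀ i j : Fin n, j < i → T i j = 0) (hN : T * Tᴴ = Tᴴ * T) :
    ∀ i j : Fin n, i ≠ j → T i j = 0 := by
  -- first prove the strictly-upper entries vanish, by strong induction on the row
  have key : ∀ m : ℕ, ∀ i : Fin n, (i : ℕ) = m → ∀ j, i < j → T i j = 0 := by
    intro m
    induction m using Nat.strong_induction_on with
    | _ m IH =>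
      intro i him j hij
      have hcol : ∑ k, Complex.normSq (T k i) = Complex.normSq (T i i) := by
        refine Finset.sum_eq_single i (fun k _ hk => ?_) (by simp)
        rcases lt_or_gt_of_ne hk with h | h
        · -- k < i : strictly upper entry of an earlier row
          rw [IH k (him ▸ h) k rfl i h]; simp
        · rw [hT k i h]; simp
      have hrow := normal_row_col hN i
      rw [hcol] at hrow
      have hsplit : ∑ k, Complex.normSq (T i k) =
          Complex.normSq (T i i) + ∑ k ∈ Finset.univ.erase i, Complex.normSq (T i k) := by
        exact (Finset.add_sum_erase Finset.univ _ (Finset.mem_univ i)).symm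
      rw [hsplit] at hrow
      have hzero : ∑ k ∈ Finset.univ.erase i, Complex.normSq (T i k) = 0 := by linarith
      have := (Finset.sum_eq_zero_iff_of_nonneg (fun k _ => Complex.normSq_nonneg _)).mp hzero
        j (Finset.mem_erase.mpr ⟨(ne_of_lt hij).symm, Finset.mem_univ j⟩)
      exact Complex.normSq_eq_zero.mp this
  intro i j hij
  rcases lt_or_gt_of_ne hij with h | h
  · exact key i i rfl j h
  · exact hT i j h



variable {n : ℕ}

lemma smul_one_sub_normal {H : Matrix (Fin n) (Fin n) ℂ} (hH : H * Hᴴ = Hᴴ * H) (z : ℂ) :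
    (z • (1 : Matrix (Fin n) (Fin n) ℂ) - H) * (z • (1 : Matrix (Fin n) (Fin n) ℂ) - H)ᴴ
      = (z • (1 : Matrix (Fin n) (Fin n) ℂ) - H)ᴴ * (z • (1 : Matrix (Fin n) (Fin n) ℂ) - H) := by
  have hconj : (z • (1 : Matrix (Fin n) (Fin n) ℂ) - H)ᴴ
      = (starRingEnd ℂ z) • (1 : Matrix (Fin n) (Fin n) ℂ) - Hᴴ := by
    rw [conjTranspose_sub, conjTranspose_smul]
    simp
  rw [hconj]
  rw [Matrix.sub_mul, Matrix.mul_sub, Matrix.mul_sub, Matrix.sub_mul, Matrix.mul_sub,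
    Matrix.mul_sub]
  rw [smul_mul_assoc, smul_mul_assoc, mul_smul_comm, mul_smul_comm, smul_mul_assoc,
    mul_smul_comm, smul_mul_assoc, mul_smul_comm]
  rw [hH, one_mul, mul_one, one_mul, mul_one, smul_smul, smul_smul, mul_comm z]
  simp only [one_mul, mul_one]
  abel

/-- The core inequality: if `T` is upper triangular and `H` is normal, then for each `i` the
squared norm of the `i`-th column of `T i i • 1 - H` is at most the squared Frobenius norm
of `T - H`. -/
lemma core_ineq {T H : Matrix (Fin n) (Fin n) ℂ}
    (hT : ∀ i j : Fin n, j < i → T i j = 0) (hH : H * Hᴴ = Hᴴ * H) (i : Fin n) :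
    ∑ j, Complex.normSq ((T i i • (1 : Matrix (Fin n) (Fin n) ℂ) - H) j i)
      ≤ fro (T - H) := by
  set z := T i i with hz
  set K := z • (1 : Matrix (Fin n) (Fin n) ℂ) - H with hK
  set G := T - H with hG
  have hKap : ∀ a b : Fin n, K a b = (if a = b then z else 0) - H a b := by
    intro a b
    simp [hK, Matrix.smul_apply, Matrix.one_apply, Matrix.sub_apply]
  have hGap : ∀ a b : Fin n, G a b = T a b - H a b := fun a b => rfl
  -- column mass = row mass
  have hcolrow : ∑ j, Complex.normSq (K j i) = ∑ j, Complex.normSq (K i j) :=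
    (normal_row_col (smul_one_sub_normal hH z) i).symm
  -- split the row
  have hrowsplit : ∑ j, Complex.normSq (K i j)
      = (∑ j ∈ Finset.univ.filter (fun j => j ≤ i), Complex.normSq (G i j))
        + ∑ j ∈ Finset.univ.filter (fun j => ¬ j ≤ i), Complex.normSq (H i j) := by
    rw [← Finset.sum_filter_add_sum_filter_not Finset.univ (fun j => j ≤ i)
      (fun j => Complex.normSq (K i j))]
    congr 1
    · refine Finset.sum_congr rfl fun j hj => ?_
      have hj' : j ≤ i := (Finset.mem_filter.mp hj).2
      rcases eq_or_lt_of_le hj' with h | h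
      · subst h
        rw [hKap, hGap, hz]
        simp
      · rw [hKap, hGap, hT i j h]
        have : ¬ (i = j) := fun h' => absurd h' (by exact fun h'' => absurd (h'' ▸ h) (lt_irrefl _))
        simp [this]
    · refine Finset.sum_congr rfl fun j hj => ?_
      have hj' : ¬ j ≤ i := (Finset.mem_filter.mp hj).2
      have : ¬ (i = j) := fun h' => hj' (le_of_eq h'.symm)
      rw [hKap]
      simp [this]
  -- Block identity for H at level i
  have hblock :
      (∑ k ∈ Finset.univ.filter (fun k => k ≤ i),
        ∑ j ∈ Finset.univ.filter (fun j => ¬ j ≤ i), Complex.normSq (H k j))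
      = ∑ k ∈ Finset.univ.filter (fun k => k ≤ i),
        ∑ j ∈ Finset.univ.filter (fun j => ¬ j ≤ i), Complex.normSq (H j k) := by
    have hsum : ∀ k : Fin n, ∑ j, Complex.normSq (H k j) = ∑ j, Complex.normSq (H j k) :=
      normal_row_col hH
    have h1 : ∀ k : Fin n,
        (∑ j ∈ Finset.univ.filter (fun j => j ≤ i), Complex.normSq (H k j))
          + ∑ j ∈ Finset.univ.filter (fun j => ¬ j ≤ i), Complex.normSq (H k j)
        = (∑ j ∈ Finset.univ.filter (fun j => j ≤ i), Complex.normSq (H j k))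
          + ∑ j ∈ Finset.univ.filter (fun j => ¬ j ≤ i), Complex.normSq (H j k) := by
      intro k
      rw [Finset.sum_filter_add_sum_filter_not, Finset.sum_filter_add_sum_filter_not]
      exact hsum k
    have h2 := Finset.sum_congr rfl (fun k (_ : k ∈ Finset.univ.filter (fun k => k ≤ i)) => h1 k)
    rw [Finset.sum_add_distrib, Finset.sum_add_distrib] at h2
    have hsym :
        (∑ k ∈ Finset.univ.filter (fun k => k ≤ i),
          ∑ j ∈ Finset.univ.filter (fun j => j ≤ i), Complex.normSq (H k j))
        = ∑ k ∈ Finset.univ.filter (fun k => k ≤ i),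
          ∑ j ∈ Finset.univ.filter (fun j => j ≤ i), Complex.normSq (H j k) :=
      Finset.sum_comm
    linarith
  -- the strictly-lower part of H equals that of -G
  have hlower :
      (∑ k ∈ Finset.univ.filter (fun k => k ≤ i),
        ∑ j ∈ Finset.univ.filter (fun j => ¬ j ≤ i), Complex.normSq (H j k))
      = ∑ k ∈ Finset.univ.filter (fun k => k ≤ i),
        ∑ j ∈ Finset.univ.filter (fun j => ¬ j ≤ i), Complex.normSq (G j k) := by
    refine Finset.sum_congr rfl fun k hk => Finset.sum_congr rfl fun j hj => ?_
    have hk' : k ≤ i := (Finset.mem_filter.mp hk).2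
    have hj' : i < j := lt_of_not_ge (Finset.mem_filter.mp hj).2
    have : T j k = 0 := hT j k (lt_of_le_of_lt hk' hj')
    rw [hGap, this]
    simp [Complex.normSq_neg]
  -- the row tail of H is bounded by the block
  have htail : (∑ j ∈ Finset.univ.filter (fun j => ¬ j ≤ i), Complex.normSq (H i j))
      ≤ ∑ k ∈ Finset.univ.filter (fun k => k ≤ i),
        ∑ j ∈ Finset.univ.filter (fun j => ¬ j ≤ i), Complex.normSq (H k j) := by
    refine Finset.single_le_sum
      (f := fun k => ∑ j ∈ Finset.univ.filter (fun j => ¬ j ≤ i), Complex.normSq (H k j))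
      (fun k _ => ?_) ?_
    · exact Finset.sum_nonneg fun j _ => Complex.normSq_nonneg _
    · simp
  -- assemble: bound by disjoint pieces of fro G
  have hfro : (∑ j ∈ Finset.univ.filter (fun j => j ≤ i), Complex.normSq (G i j))
      + (∑ k ∈ Finset.univ.filter (fun k => k ≤ i),
          ∑ j ∈ Finset.univ.filter (fun j => ¬ j ≤ i), Complex.normSq (G j k))
      ≤ fro G := by
    have hswap : (∑ k ∈ Finset.univ.filter (fun k => k ≤ i),
          ∑ j ∈ Finset.univ.filter (fun j => ¬ j ≤ i), Complex.normSq (G j k))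
        = ∑ j ∈ Finset.univ.filter (fun j => ¬ j ≤ i),
          ∑ k ∈ Finset.univ.filter (fun k => k ≤ i), Complex.normSq (G j k) :=
      Finset.sum_comm
    rw [hswap]
    have hfro_split : fro G
        = (∑ a ∈ Finset.univ.filter (fun a => a ≤ i), ∑ b, Complex.normSq (G a b))
          + ∑ a ∈ Finset.univ.filter (fun a => ¬ a ≤ i), ∑ b, Complex.normSq (G a b) := by
      rw [fro, ← Finset.sum_filter_add_sum_filter_not Finset.univ (fun a => a ≤ i)]
    rw [hfro_split]
    have h1 : (∑ j ∈ Finset.univ.filter (fun j => j ≤ i), Complex.normSq (G i j))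
        ≤ ∑ a ∈ Finset.univ.filter (fun a => a ≤ i), ∑ b, Complex.normSq (G a b) := by
      have hle : (∑ j ∈ Finset.univ.filter (fun j => j ≤ i), Complex.normSq (G i j))
          ≤ ∑ b, Complex.normSq (G i b) :=
        Finset.sum_le_sum_of_subset_of_nonneg (Finset.filter_subset _ _)
          (fun b _ _ => Complex.normSq_nonneg _)
      refine le_trans hle ?_
      refine Finset.single_le_sum (f := fun a => ∑ b, Complex.normSq (G a b))
        (fun a _ => ?_) ?_
      · exact Finset.sum_nonneg fun b _ => Complex.normSq_nonneg _
      · simp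
    have h2 : (∑ j ∈ Finset.univ.filter (fun j => ¬ j ≤ i),
          ∑ k ∈ Finset.univ.filter (fun k => k ≤ i), Complex.normSq (G j k))
        ≤ ∑ a ∈ Finset.univ.filter (fun a => ¬ a ≤ i), ∑ b, Complex.normSq (G a b) := by
      refine Finset.sum_le_sum fun j _ => ?_
      exact Finset.sum_le_sum_of_subset_of_nonneg (Finset.filter_subset _ _)
        (fun b _ _ => Complex.normSq_nonneg _)
    linarith
  calc ∑ j, Complex.normSq (K j i) = ∑ j, Complex.normSq (K i j) := hcolrow
    _ = _ + _ := hrowsplit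
    _ ≤ _ := by
        refine le_trans (add_le_add (le_refl _) (le_trans htail (le_of_eq (hblock.trans hlower)))) hfro



variable {n : ℕ}

lemma mulVec_normSq {R : Matrix (Fin n) (Fin n) ℂ} (hR : Rᴴ * R = 1) (x : Fin n → ℂ) :
    ∑ j, Complex.normSq ((R *ᵥ x) j) = ∑ j, Complex.normSq (x j) := by
  have key : star (R *ᵥ x) ⬝ᵥ (R *ᵥ x) = star x ⬝ᵥ x := by
    rw [Matrix.star_mulVec, Matrix.dotProduct_mulVec, Matrix.vecMul_vecMul, hR,
      Matrix.vecMul_one]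
  have h1 : ∀ v : Fin n → ℂ, star v ⬝ᵥ v = ∑ j, (Complex.normSq (v j) : ℂ) := by
    intro v
    simp [dotProduct, Complex.normSq_eq_conj_mul_self]
  rw [h1, h1] at key
  exact_mod_cast key

lemma col_normSq_eq {R S H : Matrix (Fin n) (Fin n) ℂ} (hR : Rᴴ * R = 1)
    (hS : S = Rᴴ * H * R) (hSdiag : ∀ k l : Fin n, k ≠ l → S k l = 0) (z : ℂ) (i : Fin n) :
    ∑ j, Complex.normSq ((z • (1 : Matrix (Fin n) (Fin n) ℂ) - H) j i)
      = ∑ k, Complex.normSq (z - S k k) * Complex.normSq (R i k) := by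
  have hRR' : R * Rᴴ = 1 := mul_eq_one_comm.mp hR
  have hH : H = R * S * Rᴴ := by
    rw [hS]
    rw [show R * (Rᴴ * H * R) * Rᴴ = (R * Rᴴ) * H * (R * Rᴴ) by noncomm_ring]
    rw [hRR', Matrix.one_mul, Matrix.mul_one]
  have hKey : z • (1 : Matrix (Fin n) (Fin n) ℂ) - H
      = R * ((z • (1 : Matrix (Fin n) (Fin n) ℂ) - S) * Rᴴ) := by
    rw [Matrix.sub_mul, Matrix.mul_sub, smul_mul_assoc, Matrix.one_mul, mul_smul_comm, hRR',
      ← Matrix.mul_assoc, ← hH]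
  set y : Fin n → ℂ := fun k => ((z • (1 : Matrix (Fin n) (Fin n) ℂ) - S) * Rᴴ) k i with hy
  have hcol : ∀ j, (z • (1 : Matrix (Fin n) (Fin n) ℂ) - H) j i = (R *ᵥ y) j := by
    intro j
    rw [hKey]
    simp [Matrix.mul_apply, Matrix.mulVec, dotProduct, hy]
  have hyval : ∀ k, y k = (z - S k k) * (starRingEnd ℂ) (R i k) := by
    intro k
    rw [hy]
    simp only [Matrix.mul_apply]
    rw [Finset.sum_eq_single k]
    · simp [Matrix.sub_apply, Matrix.smul_apply, Matrix.one_apply, Matrix.conjTranspose_apply,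
        Complex.star_def]
    · intro l _ hl
      have : S k l = 0 := hSdiag k l (fun h => hl h.symm)
      simp [Matrix.sub_apply, Matrix.smul_apply, Matrix.one_apply, Ne.symm hl, this]
    · simp
  calc ∑ j, Complex.normSq ((z • (1 : Matrix (Fin n) (Fin n) ℂ) - H) j i)
      = ∑ j, Complex.normSq ((R *ᵥ y) j) := by
        refine Finset.sum_congr rfl fun j _ => ?_; rw [hcol]
    _ = ∑ k, Complex.normSq (y k) := mulVec_normSq hR y
    _ = ∑ k, Complex.normSq (z - S k k) * Complex.normSq (R i k) := by
        refine Finset.sum_congr rfl fun k _ => ?_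
        rw [hyval, Complex.normSq_mul, Complex.normSq_conj]

lemma unitary_normSq_doublyStochastic {R : Matrix (Fin n) (Fin n) ℂ} (hR : Rᴴ * R = 1) :
    Matrix.of (fun i k => Complex.normSq (R i k)) ∈ doublyStochastic ℝ (Fin n) := by
  have hRR' : R * Rᴴ = 1 := mul_eq_one_comm.mp hR
  rw [mem_doublyStochastic_iff_sum]
  refine ⟨fun i j => Complex.normSq_nonneg _, fun i => ?_, fun j => ?_⟩
  · have := mul_conjTranspose_diag R i
    rw [hRR'] at this
    simp only [Matrix.one_apply_eq] at this
    have h2 : (∑ j, (Complex.normSq (R i j) : ℂ)) = 1 := this.symm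
    exact_mod_cast h2
  · have := conjTranspose_mul_diag R j
    rw [hR] at this
    simp only [Matrix.one_apply_eq] at this
    have h2 : (∑ i, (Complex.normSq (R i j) : ℂ)) = 1 := this.symm
    exact_mod_cast h2

/-- Birkhoff-type bound: a doubly stochastic average dominates the best permutation. -/
lemma exists_perm_le {s : Matrix (Fin n) (Fin n) ℝ} (hs : s ∈ doublyStochastic ℝ (Fin n))
    (c : Fin n → Fin n → ℝ) :
    ∃ σ : Equiv.Perm (Fin n), ∑ i, c i (σ i) ≤ ∑ i, ∑ k, s i k * c i k := by
  obtain ⟨w, hw0, hw1, hwsum⟩ := exists_eq_sum_perm_of_mem_doublyStochastic hs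
  have hperm : ∀ σ : Equiv.Perm (Fin n), ∀ i, ∑ k, (σ.permMatrix ℝ) i k * c i k = c i (σ i) := by
    intro σ i
    rw [Finset.sum_eq_single (σ i)]
    · simp [Equiv.Perm.permMatrix, PEquiv.toMatrix_apply, Equiv.toPEquiv_apply]
    · intro k _ hk
      simp [Equiv.Perm.permMatrix, PEquiv.toMatrix_apply, Equiv.toPEquiv_apply, Ne.symm hk]
    · simp
  have h1 : ∀ i k, s i k = ∑ σ : Equiv.Perm (Fin n), w σ * (σ.permMatrix ℝ) i k := by
    intro i k
    rw [← hwsum]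
    simp only [Matrix.sum_apply, Matrix.smul_apply, smul_eq_mul]
  have htotal : ∑ i, ∑ k, s i k * c i k = ∑ σ : Equiv.Perm (Fin n), w σ * ∑ i, c i (σ i) := by
    calc ∑ i, ∑ k, s i k * c i k
        = ∑ i, ∑ k, ∑ σ : Equiv.Perm (Fin n), w σ * ((σ.permMatrix ℝ) i k * c i k) := by
          refine Finset.sum_congr rfl fun i _ => Finset.sum_congr rfl fun k _ => ?_
          rw [h1, Finset.sum_mul]
          exact Finset.sum_congr rfl fun σ _ => by ring
      _ = ∑ i, ∑ σ : Equiv.Perm (Fin n), ∑ k, w σ * ((σ.permMatrix ℝ) i k * c i k) := by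
          exact Finset.sum_congr rfl fun i _ => Finset.sum_comm
      _ = ∑ σ : Equiv.Perm (Fin n), ∑ i, ∑ k, w σ * ((σ.permMatrix ℝ) i k * c i k) :=
          Finset.sum_comm
      _ = ∑ σ : Equiv.Perm (Fin n), w σ * ∑ i, c i (σ i) := by
          refine Finset.sum_congr rfl fun σ _ => ?_
          rw [Finset.mul_sum]
          refine Finset.sum_congr rfl fun i _ => ?_
          rw [← Finset.mul_sum, hperm]
  obtain ⟨σ₀, _, hσ₀⟩ := Finset.exists_min_image Finset.univ
    (fun σ : Equiv.Perm (Fin n) => ∑ i, c i (σ i)) ⟨1, Finset.mem_univ 1⟩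
  refine ⟨σ₀, ?_⟩
  rw [htotal]
  calc ∑ i, c i (σ₀ i) = ∑ σ : Equiv.Perm (Fin n), w σ * ∑ i, c i (σ₀ i) := by
        rw [← Finset.sum_mul, hw1, one_mul]
    _ ≤ ∑ σ : Equiv.Perm (Fin n), w σ * ∑ i, c i (σ i) := by
        refine Finset.sum_le_sum fun σ _ => ?_
        exact mul_le_mul_of_nonneg_left (hσ₀ σ (Finset.mem_univ σ)) (hw0 σ)



variable {n : ℕ}

lemma charpoly_unitary_conj {U : Matrix (Fin n) (Fin n) ℂ} (hU : Uᴴ * U = 1)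
    (M : Matrix (Fin n) (Fin n) ℂ) : (Uᴴ * M * U).charpoly = M.charpoly := by
  let f : ℂ →+* ℂ[X] := Polynomial.C
  have hmapmul : ∀ A B : Matrix (Fin n) (Fin n) ℂ, (A * B).map f = A.map f * B.map f :=
    fun A B => Matrix.map_mul
  have hmapone : (1 : Matrix (Fin n) (Fin n) ℂ).map f = 1 := Matrix.map_one f f.map_zero f.map_one
  have hUmap : Uᴴ.map f * U.map f = 1 := by rw [← hmapmul, hU, hmapone]
  have hchar : (Uᴴ * M * U).charmatrix = Uᴴ.map f * M.charmatrix * U.map f := by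
    rw [Matrix.charmatrix, Matrix.charmatrix]
    rw [Matrix.mul_sub, Matrix.sub_mul]
    congr 1
    · have h1 : Uᴴ.map f * Matrix.scalar (Fin n) (X : ℂ[X]) =
          Matrix.scalar (Fin n) (X : ℂ[X]) * Uᴴ.map f :=
        (Matrix.scalar_commute (X : ℂ[X]) (fun r => Commute.all _ _) (Uᴴ.map f)).eq.symm
      rw [h1, Matrix.mul_assoc, hUmap, Matrix.mul_one]
    · simp only [RingHom.mapMatrix_apply]
      rw [← hmapmul, ← hmapmul]
  rw [Matrix.charpoly, Matrix.charpoly, hchar, Matrix.det_mul, Matrix.det_mul]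
  have : Uᴴ.map f * U.map f = 1 := hUmap
  have hdet : (Uᴴ.map f).det * (U.map f).det = 1 := by
    rw [← Matrix.det_mul, hUmap, Matrix.det_one]
  calc (Uᴴ.map f).det * M.charmatrix.det * (U.map f).det
      = ((Uᴴ.map f).det * (U.map f).det) * M.charmatrix.det := by ring
    _ = M.charmatrix.det := by rw [hdet, one_mul]

/-- two tuples whose associated products of linear factors agree differ by a permutation -/
lemma perm_of_prod_eq {m : ℕ} {a b : Fin m → ℂ}
    (h : ∏ i, (X - C (a i)) = ∏ i, (X - C (b i))) :
    ∃ σ : Equiv.Perm (Fin m), ∀ i, a i = b (σ i) := by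
  -- multisets of values are equal
  have hmul : Multiset.map a Finset.univ.val = Multiset.map b Finset.univ.val := by
    have ha : (∏ i, (X - C (a i))) =
        ((Multiset.map a Finset.univ.val).map fun z => X - C z).prod := by
      rw [Multiset.map_map]
      rfl
    have hb : (∏ i, (X - C (b i))) =
        ((Multiset.map b Finset.univ.val).map fun z => X - C z).prod := by
      rw [Multiset.map_map]
      rfl
    have := congrArg Polynomial.roots (ha.symm.trans (h.trans hb))
    rwa [Polynomial.roots_multiset_prod_X_sub_C, Polynomial.roots_multiset_prod_X_sub_C] at this
  -- embed ℂ into a linear order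
  classical
  let e : ℂ → Lex (ℝ × ℝ) := fun z => toLex (z.re, z.im)
  have he : Function.Injective e := by
    intro x y hxy
    have h1 : (x.re, x.im) = (y.re, y.im) := congrArg ofLex hxy
    exact Complex.ext (congrArg Prod.fst h1) (congrArg Prod.snd h1)
  have hmul' : Multiset.map (e ∘ a) Finset.univ.val = Multiset.map (e ∘ b) Finset.univ.val := by
    rw [← Multiset.map_map, ← Multiset.map_map, hmul]
  -- sort both
  let σa := Tuple.sort (e ∘ a)
  let σb := Tuple.sort (e ∘ b)
  have hmono : ∀ (f : Fin m → ℂ) (σ : Equiv.Perm (Fin m)),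
      Multiset.map (e ∘ f) Finset.univ.val = Multiset.map ((e ∘ f) ∘ σ) Finset.univ.val := by
    intro f σ
    have : (Finset.univ.val.map fun i => σ i) = Finset.univ.val := by
      have := congrArg Finset.val (Finset.map_univ_equiv σ.symm)
      simpa [Finset.map_val] using this
    conv_lhs => rw [← this]
    rw [Multiset.map_map]
  have hsorted_eq : (e ∘ a) ∘ σa = (e ∘ b) ∘ σb := by
    have h1 : Monotone ((e ∘ a) ∘ σa) := Tuple.monotone_sort _
    have h2 : Monotone ((e ∘ b) ∘ σb) := Tuple.monotone_sort _
    have hms : Multiset.map ((e ∘ a) ∘ σa) Finset.univ.val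
        = Multiset.map ((e ∘ b) ∘ σb) Finset.univ.val := by
      rw [← hmono, ← hmono, hmul']
    -- convert to lists
    have hla : Multiset.map ((e ∘ a) ∘ σa) Finset.univ.val = ↑(List.ofFn ((e ∘ a) ∘ σa)) :=
      Fin.univ_val_map _
    have hlb : Multiset.map ((e ∘ b) ∘ σb) Finset.univ.val = ↑(List.ofFn ((e ∘ b) ∘ σb)) :=
      Fin.univ_val_map _
    rw [hla, hlb, Multiset.coe_eq_coe] at hms
    have := hms.eq_of_sortedLE h1.sortedLE_ofFn h2.sortedLE_ofFn
    exact List.ofFn_injective this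
  have hab : ∀ i, a (σa i) = b (σb i) := by
    intro i
    exact he (congrFun hsorted_eq i)
  refine ⟨σa.symm.trans σb, fun i => ?_⟩
  have := hab (σa.symm i)
  simpa using this


lemma normal_conj {Q M : Matrix (Fin n) (Fin n) ℂ} (hQ : Qᴴ * Q = 1)
    (hM : M * Mᴴ = Mᴴ * M) :
    (Qᴴ * M * Q) * (Qᴴ * M * Q)ᴴ = (Qᴴ * M * Q)ᴴ * (Qᴴ * M * Q) := by
  have hQQ' : Q * Qᴴ = 1 := mul_eq_one_comm.mp hQ
  have h1 : (Qᴴ * M * Q)ᴴ = Qᴴ * Mᴴ * Q := by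
    simp [Matrix.conjTranspose_mul, Matrix.mul_assoc]
  rw [h1]
  calc (Qᴴ * M * Q) * (Qᴴ * Mᴴ * Q) = Qᴴ * (M * (Q * Qᴴ) * Mᴴ) * Q := by noncomm_ring
    _ = Qᴴ * (M * Mᴴ) * Q := by rw [hQQ']; noncomm_ring
    _ = Qᴴ * (Mᴴ * M) * Q := by rw [hM]
    _ = Qᴴ * (Mᴴ * (Q * Qᴴ) * M) * Q := by rw [hQQ']; noncomm_ring
    _ = (Qᴴ * Mᴴ * Q) * (Qᴴ * M * Q) := by noncomm_ring

lemma normal_add_smul_one {H : Matrix (Fin n) (Fin n) ℂ} (hH : H * Hᴴ = Hᴴ * H) (μ : ℂ) :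
    (H + μ • (1 : Matrix (Fin n) (Fin n) ℂ)) * (H + μ • (1 : Matrix (Fin n) (Fin n) ℂ))ᴴ
    = (H + μ • (1 : Matrix (Fin n) (Fin n) ℂ))ᴴ * (H + μ • (1 : Matrix (Fin n) (Fin n) ℂ)) := by
  have hconj : (H + μ • (1 : Matrix (Fin n) (Fin n) ℂ))ᴴ
      = Hᴴ + (starRingEnd ℂ μ) • (1 : Matrix (Fin n) (Fin n) ℂ) := by
    rw [conjTranspose_add, conjTranspose_smul]
    simp
  rw [hconj]
  rw [Matrix.add_mul, Matrix.mul_add, Matrix.mul_add, Matrix.add_mul, Matrix.mul_add,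
    Matrix.mul_add]
  rw [mul_smul_comm, smul_mul_assoc, smul_mul_assoc, mul_smul_comm, mul_smul_comm,
    smul_mul_assoc, smul_mul_assoc, mul_smul_comm]
  rw [hH, one_mul, mul_one, one_mul, mul_one, smul_smul, smul_smul, mul_comm μ]
  simp only [one_mul, mul_one]
  abel

lemma trace_unitary_conj {Q : Matrix (Fin n) (Fin n) ℂ} (hQ : Qᴴ * Q = 1)
    (M : Matrix (Fin n) (Fin n) ℂ) : (Qᴴ * M * Q).trace = M.trace := by
  have hQQ' : Q * Qᴴ = 1 := mul_eq_one_comm.mp hQ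
  rw [Matrix.trace_mul_cycle, hQQ', Matrix.one_mul]

lemma fro_sub_smul_one (hn : 1 ≤ n) (E : Matrix (Fin n) (Fin n) ℂ) :
    fro (E - (E.trace / n) • (1 : Matrix (Fin n) (Fin n) ℂ))
      = fro E - (n : ℝ) * Complex.normSq (E.trace / n) := by
  set μ : ℂ := E.trace / n with hμ
  have hnc : (n : ℂ) ≠ 0 := by
    exact_mod_cast Nat.cast_ne_zero.mpr (by omega)
  have htr : (n : ℂ) * μ = E.trace := by
    rw [hμ]; field_simp
  have hterm : ∀ i j : Fin n, Complex.normSq ((E - μ • (1 : Matrix (Fin n) (Fin n) ℂ)) i j)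
      = Complex.normSq (E i j) + Complex.normSq ((μ • (1 : Matrix (Fin n) (Fin n) ℂ)) i j)
        - 2 * (E i j * (starRingEnd ℂ) ((μ • (1 : Matrix (Fin n) (Fin n) ℂ)) i j)).re := by
    intro i j
    rw [Matrix.sub_apply, Complex.normSq_sub]
  have h2 : ∑ i, ∑ j, Complex.normSq ((μ • (1 : Matrix (Fin n) (Fin n) ℂ)) i j)
      = (n : ℝ) * Complex.normSq μ := by
    have : ∀ i : Fin n, ∑ j, Complex.normSq ((μ • (1 : Matrix (Fin n) (Fin n) ℂ)) i j)
        = Complex.normSq μ := by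
      intro i
      rw [Finset.sum_eq_single i]
      · simp [Matrix.smul_apply, Matrix.one_apply]
      · intro j _ hj
        simp [Matrix.smul_apply, Matrix.one_apply, Ne.symm hj]
      · simp
    rw [Finset.sum_congr rfl fun i _ => this i]
    simp [mul_comm]
  have h3 : ∑ i, ∑ j, (E i j * (starRingEnd ℂ) ((μ • (1 : Matrix (Fin n) (Fin n) ℂ)) i j)).re
      = (n : ℝ) * Complex.normSq μ := by
    have hin : ∀ i : Fin n, ∑ j, (E i j * (starRingEnd ℂ)
        ((μ • (1 : Matrix (Fin n) (Fin n) ℂ)) i j)).re = (E i i * (starRingEnd ℂ) μ).re := by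
      intro i
      rw [Finset.sum_eq_single i]
      · simp [Matrix.smul_apply, Matrix.one_apply]
      · intro j _ hj
        simp [Matrix.smul_apply, Matrix.one_apply, Ne.symm hj]
      · simp
    rw [Finset.sum_congr rfl fun i _ => hin i]
    have : ∑ i, (E i i * (starRingEnd ℂ) μ).re = ((∑ i, E i i) * (starRingEnd ℂ) μ).re := by
      rw [Finset.sum_mul, Complex.re_sum]
    rw [this]
    have htrE : (∑ i, E i i) = E.trace := rfl
    rw [htrE, ← htr]
    have : (n : ℂ) * μ * (starRingEnd ℂ) μ = (n : ℂ) * Complex.normSq μ := by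
      rw [mul_assoc, Complex.mul_conj]
    rw [this]
    simp
  calc fro (E - μ • (1 : Matrix (Fin n) (Fin n) ℂ))
      = ∑ i, ∑ j, (Complex.normSq (E i j)
          + Complex.normSq ((μ • (1 : Matrix (Fin n) (Fin n) ℂ)) i j)
          - 2 * (E i j * (starRingEnd ℂ) ((μ • (1 : Matrix (Fin n) (Fin n) ℂ)) i j)).re) := by
        rw [fro]
        exact Finset.sum_congr rfl fun i _ => Finset.sum_congr rfl fun j _ => hterm i j
    _ = fro E + (n : ℝ) * Complex.normSq μ - 2 * ((n : ℝ) * Complex.normSq μ) := by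
        simp only [Finset.sum_sub_distrib, Finset.sum_add_distrib, ← Finset.mul_sum]
        rw [h2, h3, fro]
    _ = fro E - (n : ℝ) * Complex.normSq μ := by ring

end SunAux

open SunAux in
theorem stmt9 {n : ℕ} (hn : 1 ≤ n) (A E : Matrix (Fin n) (Fin n) ℂ)
    (hA : A * A.conjTranspose = A.conjTranspose * A)
    (lam lam' : Fin n → ℂ)
    (hlam : A.charpoly = ∏ i, (X - C (lam i)))
    (hlam' : (A + E).charpoly = ∏ i, (X - C (lam' i))) :
    ∃ π : Equiv.Perm (Fin n),
      ∑ i, ‖lam' (π i) - lam i‖ ^ 2 ≤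
        (n : ℝ) * frobSq E - (((n : ℝ) - 1) / n) * ‖E.trace‖ ^ 2 := by
  classical
  set μ : ℂ := E.trace / n with hμ
  have hnc : (n : ℂ) ≠ 0 := Nat.cast_ne_zero.mpr (by omega)
  have hnr : (0 : ℝ) < n := by exact_mod_cast Nat.pos_of_ne_zero (by omega)
  obtain ⟨Q, hQ, hQtri⟩ := SunAux.schur n (A + E)
  set T : Matrix (Fin n) (Fin n) ℂ := Qᴴ * (A + E) * Q with hT
  have hTtri : ∀ i j : Fin n, j < i → T i j = 0 := hQtri
  set H : Matrix (Fin n) (Fin n) ℂ := Qᴴ * A * Q with hH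
  have hHnormal : H * Hᴴ = Hᴴ * H := SunAux.normal_conj hQ hA
  set H' : Matrix (Fin n) (Fin n) ℂ := H + μ • (1 : Matrix (Fin n) (Fin n) ℂ) with hH'
  have hH'normal : H' * H'ᴴ = H'ᴴ * H' := SunAux.normal_add_smul_one hHnormal μ
  have hGfro : fro (T - H') = fro (E - μ • (1 : Matrix (Fin n) (Fin n) ℂ)) := by
    have hGeq : T - H' = Qᴴ * (E - μ • (1 : Matrix (Fin n) (Fin n) ℂ)) * Q := by
      rw [hT, hH', hH]
      have h1 : Qᴴ * (E - μ • (1 : Matrix (Fin n) (Fin n) ℂ)) * Q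
          = Qᴴ * E * Q - μ • (Qᴴ * Q) := by
        have hmid : Qᴴ * (μ • (1 : Matrix (Fin n) (Fin n) ℂ)) * Q = μ • (Qᴴ * Q) := by
          rw [mul_smul_comm, smul_mul_assoc, Matrix.mul_one]
        rw [Matrix.mul_sub, Matrix.sub_mul, hmid]
      rw [h1, hQ, Matrix.mul_add, Matrix.add_mul]
      abel
    rw [hGeq]
    exact SunAux.fro_unitary_conj hQ
  obtain ⟨R, hR, hRtri⟩ := SunAux.schur n H
  set S : Matrix (Fin n) (Fin n) ℂ := Rᴴ * H * R with hS
  have hSnormal : S * Sᴴ = Sᴴ * S := SunAux.normal_conj hR hHnormal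
  have hSdiag : ∀ k l : Fin n, k ≠ l → S k l = 0 :=
    SunAux.normal_triangular_diag hRtri hSnormal
  have hcore : ∀ i, ∑ k, Complex.normSq (T i i - μ - S k k) * Complex.normSq (R i k)
      ≤ fro (E - μ • (1 : Matrix (Fin n) (Fin n) ℂ)) := by
    intro i
    have h1 := SunAux.core_ineq hTtri hH'normal i
    have hshift : T i i • (1 : Matrix (Fin n) (Fin n) ℂ) - H'
        = (T i i - μ) • (1 : Matrix (Fin n) (Fin n) ℂ) - H := by
      rw [hH', sub_smul]
      abel
    rw [hshift, SunAux.col_normSq_eq hR hS hSdiag (T i i - μ) i, hGfro] at h1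
    exact h1
  obtain ⟨σ, hσ⟩ := SunAux.exists_perm_le (SunAux.unitary_normSq_doublyStochastic hR)
      (fun i k => Complex.normSq (T i i - μ - S k k))
  have hsum : ∑ j, Complex.normSq (T j j - μ - S (σ j) (σ j))
      ≤ (n : ℝ) * fro (E - μ • (1 : Matrix (Fin n) (Fin n) ℂ)) := by
    refine le_trans hσ ?_
    have hin : ∀ i, (∑ k, (Matrix.of fun i k => Complex.normSq (R i k)) i k *
        Complex.normSq (T i i - μ - S k k))
        ≤ fro (E - μ • (1 : Matrix (Fin n) (Fin n) ℂ)) := by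
      intro i
      refine le_trans (le_of_eq ?_) (hcore i)
      refine Finset.sum_congr rfl fun k _ => ?_
      simp [mul_comm]
    calc (∑ i, ∑ k, (Matrix.of fun i k => Complex.normSq (R i k)) i k *
          Complex.normSq (T i i - μ - S k k))
        ≤ ∑ _i : Fin n, fro (E - μ • (1 : Matrix (Fin n) (Fin n) ℂ)) :=
          Finset.sum_le_sum fun i _ => hin i
      _ = (n : ℝ) * fro (E - μ • (1 : Matrix (Fin n) (Fin n) ℂ)) := by
          simp [Finset.sum_const, Finset.card_univ, nsmul_eq_mul]
  have hcpT : (∏ i, (X - C (lam' i))) = ∏ i, (X - C (T i i)) := by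
    rw [← hlam', ← SunAux.charpoly_unitary_conj hQ (A + E)]
    exact Matrix.charpoly_of_upperTriangular T (fun i j h => hTtri i j h)
  obtain ⟨β, hβ⟩ := SunAux.perm_of_prod_eq hcpT
  have hcpS : (∏ i, (X - C (lam i))) = ∏ i, (X - C (S i i)) := by
    have h1 : A.charpoly = H.charpoly := (SunAux.charpoly_unitary_conj hQ A).symm
    have h2 : H.charpoly = S.charpoly := (SunAux.charpoly_unitary_conj hR H).symm
    rw [← hlam, h1, h2]
    exact Matrix.charpoly_of_upperTriangular S (fun i j h => hRtri i j h)
  obtain ⟨α, hα⟩ := SunAux.perm_of_prod_eq hcpS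
  have htrT : ∑ j, T j j = A.trace + E.trace := by
    have h1 : T.trace = (A + E).trace := SunAux.trace_unitary_conj hQ (A + E)
    rw [Matrix.trace_add] at h1
    exact h1
  have htrS : ∑ k, S k k = A.trace := by
    have h1 : S.trace = H.trace := SunAux.trace_unitary_conj hR H
    have h2 : H.trace = A.trace := SunAux.trace_unitary_conj hQ A
    exact h1.trans h2
  refine ⟨α.trans (σ.symm.trans β.symm), ?_⟩
  have hLHS : ∑ i, ‖lam' ((α.trans (σ.symm.trans β.symm)) i) - lam i‖ ^ 2
      = ∑ j, Complex.normSq (T j j - S (σ j) (σ j)) := by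
    calc ∑ i, ‖lam' ((α.trans (σ.symm.trans β.symm)) i) - lam i‖ ^ 2
        = ∑ i, Complex.normSq (T (σ.symm (α i)) (σ.symm (α i)) - S (α i) (α i)) := by
          refine Finset.sum_congr rfl fun i _ => ?_
          rw [Complex.sq_norm, hβ, hα]
          simp [Equiv.trans_apply]
      _ = ∑ k, Complex.normSq (T (σ.symm k) (σ.symm k) - S k k) :=
          Equiv.sum_comp α (fun k => Complex.normSq (T (σ.symm k) (σ.symm k) - S k k))
      _ = ∑ j, Complex.normSq (T j j - S (σ j) (σ j)) := by
          rw [← Equiv.sum_comp σ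
            (fun k => Complex.normSq (T (σ.symm k) (σ.symm k) - S k k))]
          refine Finset.sum_congr rfl fun j _ => ?_
          rw [Equiv.symm_apply_apply]
  have hzero : ∑ j, (T j j - μ - S (σ j) (σ j)) = 0 := by
    rw [Finset.sum_sub_distrib, Finset.sum_sub_distrib]
    have h1 : ∑ j, S (σ j) (σ j) = ∑ k, S k k := Equiv.sum_comp σ (fun k => S k k)
    have h2 : ∑ _j : Fin n, μ = (n : ℂ) * μ := by
      simp [Finset.sum_const, Finset.card_univ, nsmul_eq_mul]
    have h3 : (n : ℂ) * μ = E.trace := by rw [hμ]; field_simp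
    rw [h1, htrS, htrT, h2, h3]
    ring
  have hexp : ∑ j, Complex.normSq (T j j - S (σ j) (σ j))
      = ∑ j, Complex.normSq (T j j - μ - S (σ j) (σ j)) + (n : ℝ) * Complex.normSq μ := by
    have hper : ∀ j, Complex.normSq (T j j - S (σ j) (σ j))
        = Complex.normSq (T j j - μ - S (σ j) (σ j)) + Complex.normSq μ
          + 2 * ((T j j - μ - S (σ j) (σ j)) * (starRingEnd ℂ) μ).re := by
      intro j
      rw [show T j j - S (σ j) (σ j) = (T j j - μ - S (σ j) (σ j)) + μ by ring]
      rw [Complex.normSq_add]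
    rw [Finset.sum_congr rfl fun j _ => hper j]
    rw [Finset.sum_add_distrib, Finset.sum_add_distrib]
    have hcross : ∑ j, 2 * ((T j j - μ - S (σ j) (σ j)) * (starRingEnd ℂ) μ).re = 0 := by
      rw [← Finset.mul_sum, ← Complex.re_sum, ← Finset.sum_mul, hzero]
      simp
    rw [hcross]
    have : ∑ _j : Fin n, Complex.normSq μ = (n : ℝ) * Complex.normSq μ := by
      simp [Finset.sum_const, Finset.card_univ, nsmul_eq_mul]
    rw [this]
    ring
  rw [hLHS, hexp]
  have hfroE := SunAux.fro_sub_smul_one hn E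
  have hnormμ : Complex.normSq μ = Complex.normSq E.trace / ((n : ℝ) * n) := by
    rw [hμ, Complex.normSq_div]
    congr 1
    rw [show ((n : ℕ) : ℂ) = (((n : ℕ) : ℝ) : ℂ) by push_cast; ring]
    rw [Complex.normSq_ofReal]
  have habs : ‖E.trace‖ ^ 2 = Complex.normSq E.trace := Complex.sq_norm _
  rw [frobSq_eq_fro, habs]
  have hb : ∑ j, Complex.normSq (T j j - μ - S (σ j) (σ j)) + (n : ℝ) * Complex.normSq μ
      ≤ (n : ℝ) * (fro E - (n : ℝ) * Complex.normSq μ) + (n : ℝ) * Complex.normSq μ := by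
    rw [← hfroE]
    linarith [hsum]
  refine le_trans hb (le_of_eq ?_)
  rw [hnormμ]
  have hnr' : (n : ℝ) ≠ 0 := ne_of_gt hnr
  field_simp
  ring
end

section
/- Let A ∈ ℂ^{n×n} be Hermitian with eigenvalues {λ_i}, and Ã = A + E with eigenvalues {λ̃_i}. Then there exists a permutation π of {1,…,n} such that ∑_{i=1}^n |λ̃_{π(i)} − λ_i|² ≤ ‖E‖_F² + δ(E)², where δ(E)² = ‖E‖_F² − (1/n)|tr(E)|². -/
section Helpers
open Matrix Polynomial


/-- From equality of value multisets, get a permutation matching two tuples. -/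
lemma exists_perm_comp' {α : Type*} : ∀ {n : ℕ} (f g : Fin n → α),
    Multiset.map f Finset.univ.val = Multiset.map g Finset.univ.val →
    ∃ σ : Equiv.Perm (Fin n), ∀ i, f i = g (σ i) := by
  intro n
  induction n with
  | zero => exact fun f g _ => ⟨1, fun i => i.elim0⟩
  | succ n ih =>
    intro f g h
    have hmem : f 0 ∈ Multiset.map g Finset.univ.val := by
      rw [← h]
      exact Multiset.mem_map_of_mem f (Finset.mem_univ_val _)
    obtain ⟨k, -, hk⟩ := Multiset.mem_map.1 hmem
    -- decompose both multisets
    have hL : Multiset.map f Finset.univ.val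
        = f 0 ::ₘ Multiset.map (fun i : Fin n => f i.succ) Finset.univ.val := by
      rw [Fin.univ_succ]
      simp only [Finset.cons_val, Multiset.map_cons, Finset.map_val, Multiset.map_map]
      rfl
    have hR : Multiset.map g Finset.univ.val
        = g k ::ₘ Multiset.map (fun i : Fin n => g (k.succAbove i)) Finset.univ.val := by
      rw [Fin.univ_succAbove _ k]
      simp only [Finset.cons_val, Multiset.map_cons, Finset.map_val, Multiset.map_map]
      rfl
    rw [hL, hR, ← hk] at h
    obtain ⟨σ', hσ'⟩ := ih (fun i => f i.succ) (fun i => g (k.succAbove i))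
      ((Multiset.cons_inj_right _).1 h)
    set t : Fin (n+1) → Fin (n+1) :=
      fun i => Fin.cases k (fun j => k.succAbove (σ' j)) i with ht
    have hinj : Function.Injective t := by
      intro a b hab
      induction a using Fin.cases with
      | zero =>
        induction b using Fin.cases with
        | zero => rfl
        | succ b =>
          exfalso
          exact Fin.succAbove_ne k (σ' b) (by simpa [ht] using hab.symm)
      | succ a =>
        induction b using Fin.cases with
        | zero =>
          exfalso
          exact Fin.succAbove_ne k (σ' a) (by simpa [ht] using hab)
        | succ b =>
          have : σ' a = σ' b := Fin.succAbove_right_injective (p := k) (by simpa [ht] using hab)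
          simp [σ'.injective this]
    refine ⟨Equiv.ofBijective t (Finite.injective_iff_bijective.1 hinj), fun i => ?_⟩
    induction i using Fin.cases with
    | zero => simpa [Equiv.ofBijective, ht] using hk.symm
    | succ i => simpa [Equiv.ofBijective, ht] using hσ' i

/-- Characteristic polynomial of an upper triangular matrix. -/
lemma charpoly_of_triangular {n : ℕ} (M : Matrix (Fin n) (Fin n) ℂ)
    (hM : ∀ i j : Fin n, j < i → M i j = 0) :
    M.charpoly = ∏ i, (X - C (M i i)) := by
  have hbt : M.charmatrix.BlockTriangular id := by
    intro i j hij
    have hne : (i : Fin n) ≠ j := fun h => by simp [h] at hij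
    rw [charmatrix_apply_ne _ _ _ hne, hM i j hij]
    simp
  rw [Matrix.charpoly, Matrix.det_of_upperTriangular hbt]
  exact Finset.prod_congr rfl fun i _ => charmatrix_apply_eq M i

end Helpers

section Schur
open Module Submodule
local notation "⟪" x ", " y "⟫" => @inner ℂ _ _ x y



/-- Schur triangularization, orthonormal-basis form. -/
lemma schur_onb : ∀ (n : ℕ) (V : Type) [NormedAddCommGroup V] [InnerProductSpace ℂ V]
    [FiniteDimensional ℂ V], finrank ℂ V = n → ∀ (f : V →ₗ[ℂ] V),
    ∃ b : OrthonormalBasis (Fin n) ℂ V, ∀ i j : Fin n, j < i → ⟪b i, f (b j)⟫ = 0 := by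
  intro n
  induction n with
  | zero =>
    intro V _ _ _ hrk f
    have : Subsingleton V := finrank_zero_iff.1 hrk
    have horm : Orthonormal ℂ (fun i : Fin 0 => (0 : V)) := by
      constructor
      · exact fun i => i.elim0
      · exact fun i => i.elim0
    refine ⟨OrthonormalBasis.mk horm ?_, fun i => i.elim0⟩
    intro x _
    have : x = 0 := Subsingleton.elim x 0
    simp [this]
  | succ n ih =>
    intro V _ _ _ hrk f
    have : Nontrivial V := Module.finrank_pos_iff (R := ℂ) |>.mp (by omega)
    obtain ⟨μ, hμ⟩ := Module.End.exists_eigenvalue (f : Module.End ℂ V)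
    obtain ⟨v₀, hv₀⟩ := hμ.exists_hasEigenvector
    set v : V := (‖v₀‖ : ℂ)⁻¹ • v₀ with hvdef
    have hvne : v₀ ≠ 0 := hv₀.right
    have hvnorm : ‖v‖ = 1 := norm_smul_inv_norm hvne
    have hfv : f v = μ • v := by
      rw [hvdef, map_smul, hv₀.apply_eq_smul, smul_comm]
    have hvne' : v ≠ 0 := by
      intro h; rw [h, norm_zero] at hvnorm; exact one_ne_zero hvnorm.symm
    set K : Submodule ℂ V := (ℂ ∙ v)ᗮ with hKdef
    have hrkK : finrank ℂ K = n := by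
      have h1 : finrank ℂ (ℂ ∙ v) = 1 := finrank_span_singleton hvne'
      have h2 := Submodule.finrank_add_finrank_orthogonal (𝕜 := ℂ) (E := V) (ℂ ∙ v)
      rw [hKdef]
      omega
    set g : K →ₗ[ℂ] K := (orthogonalProjection K).toLinearMap ∘ₗ (f ∘ₗ K.subtype) with hgdef
    obtain ⟨b', hb'⟩ := ih K hrkK g
    -- inner products with v vanish for elements of K
    have hvK : ∀ x : K, ⟪v, (x : V)⟫ = 0 := by
      intro x
      exact (Submodule.mem_orthogonal (ℂ ∙ v) (x : V)).1 x.2 v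
        (Submodule.mem_span_singleton_self v)
    set w : Fin (n+1) → V := Fin.cons v (fun i => (b' i : V)) with hwdef
    have horm : Orthonormal ℂ w := by
      rw [orthonormal_iff_ite]
      intro i j
      induction i using Fin.cases with
      | zero =>
        induction j using Fin.cases with
        | zero => simp [hwdef, inner_self_eq_norm_sq_to_K, hvnorm]
        | succ j =>
          rw [if_neg (by simp [Fin.succ_ne_zero j, (Fin.succ_ne_zero j).symm])]
          simpa [hwdef] using hvK (b' j)
      | succ i =>
        induction j using Fin.cases with
        | zero =>
          rw [if_neg (by simp [Fin.succ_ne_zero i])]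
          have := hvK (b' i)
          rw [← inner_conj_symm] at this
          simpa [hwdef] using congrArg (starRingEnd ℂ) this
        | succ j =>
          have hb := (orthonormal_iff_ite.1 b'.orthonormal) i j
          rw [Submodule.coe_inner] at hb
          simpa [hwdef, Fin.succ_inj] using hb
    have hspan : ⊤ ≤ span ℂ (Set.range w) := by
      rw [horm.linearIndependent.span_eq_top_of_card_eq_finrank
        (by simp [hrk])]
    set b : OrthonormalBasis (Fin (n+1)) ℂ V := OrthonormalBasis.mk horm hspan with hbdef
    have hbw : ∀ i, b i = w i := fun i => by rw [hbdef, OrthonormalBasis.coe_mk]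
    refine ⟨b, fun i j hij => ?_⟩
    rw [hbw, hbw]
    induction j using Fin.cases with
    | zero =>
      induction i using Fin.cases with
      | zero => exact absurd hij (lt_irrefl _)
      | succ i =>
        have : w (0 : Fin (n+1)) = v := by simp [hwdef]
        rw [this, hfv, inner_smul_right]
        have := hvK (b' i)
        rw [← inner_conj_symm] at this
        have h2 : ⟪(b' i : V), v⟫ = 0 := by
          simpa using congrArg (starRingEnd ℂ) this
        simp [hwdef, h2]
    | succ j =>
      induction i using Fin.cases with
      | zero => exact absurd hij (by simp [Fin.lt_iff_val_lt_val])
      | succ i =>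
        have hji : j < i := by
          simpa [Fin.succ_lt_succ_iff] using hij
        have hw : w j.succ = (b' j : V) := by simp [hwdef]
        have hw' : w i.succ = (b' i : V) := by simp [hwdef]
        rw [hw, hw']
        have hdec : f (b' j : V)
            = ((orthogonalProjection K (f (b' j : V))) : V)
              + (f (b' j : V) - ((orthogonalProjection K (f (b' j : V))) : V)) := by abel
        rw [hdec, inner_add_right]
        have hzero : ⟪(b' i : V), f (b' j : V) - ((orthogonalProjection K (f (b' j : V))) : V)⟫ = 0 := by
          have hmem := sub_starProjection_mem_orthogonal (K := K) (f (b' j : V))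
          rw [Submodule.mem_orthogonal] at hmem
          exact hmem _ (b' i).2
        rw [hzero, add_zero]
        have : ⟪(b' i : V), ((orthogonalProjection K (f (b' j : V))) : V)⟫
            = ⟪b' i, g (b' j)⟫ := by
          rw [Submodule.coe_inner]
          rfl
        rw [this, hb' i j hji]

end Schur

section Main
open Matrix BigOperators Polynomial Module
local notation "⟪" x ", " y "⟫" => @inner ℂ _ _ x y

noncomputable def deltaSq {n : ℕ} (M : Matrix (Fin n) (Fin n) ℂ) : ℝ :=
  frobSq M - (1 / (n : ℝ)) * ‖M.trace‖ ^ 2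

set_option maxHeartbeats 1000000 in
theorem stmt10 {n : ℕ} (hn : 1 ≤ n) (A E : Matrix (Fin n) (Fin n) ℂ)
    (hA : A.conjTranspose = A)
    (lam lam' : Fin n → ℂ)
    (hlam : A.charpoly = ∏ i, (X - C (lam i)))
    (hlam' : (A + E).charpoly = ∏ i, (X - C (lam' i))) :
    ∃ π : Equiv.Perm (Fin n),
      ∑ i, ‖lam' (π i) - lam i‖ ^ 2 ≤ frobSq E + deltaSq E := by
  classical
  set V := EuclideanSpace ℂ (Fin n) with hV
  set fA := Matrix.toEuclideanLin A with hfA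
  set fE := Matrix.toEuclideanLin E with hfE
  set fS := Matrix.toEuclideanLin (A + E) with hfS
  have hS : fS = fA + fE := by rw [hfA, hfE, hfS, map_add]
  set B := (EuclideanSpace.basisFun (Fin n) ℂ).toBasis with hB
  -- toMatrix in the standard basis recovers the matrix
  have htm : ∀ (M : Matrix (Fin n) (Fin n) ℂ),
      LinearMap.toMatrix B B (Matrix.toEuclideanLin M) = M := by
    intro M
    rw [Matrix.toEuclideanLin_eq_toLin_orthonormal, hB]
    exact LinearMap.toMatrix_toLin _ _ M
  -- entries of toMatrix over an orthonormal basis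
  have hmat : ∀ (w : OrthonormalBasis (Fin n) ℂ V) (f : V →ₗ[ℂ] V) (i j : Fin n),
      LinearMap.toMatrix w.toBasis w.toBasis f i j = ⟪w i, f (w j)⟫ := by
    intro w f i j
    rw [LinearMap.toMatrix_apply, OrthonormalBasis.coe_toBasis_repr_apply,
      OrthonormalBasis.repr_apply_apply, OrthonormalBasis.coe_toBasis]
  -- Parseval
  have hpars : ∀ (w : OrthonormalBasis (Fin n) ℂ V) (x : V),
      ∑ i, ‖⟪w i, x⟫‖ ^ 2 = ‖x‖ ^ 2 := by
    intro w x
    have h := w.sum_inner_mul_inner x x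
    have h2 : ∀ i : Fin n, ⟪x, w i⟫ * ⟪w i, x⟫
        = ((‖⟪w i, x⟫‖ ^ 2 : ℝ) : ℂ) := by
      intro i
      rw [← inner_conj_symm x (w i), mul_comm, Complex.mul_conj, Complex.sq_norm]
    rw [Finset.sum_congr rfl fun i _ => h2 i] at h
    have h3 : ((∑ i, ‖⟪w i, x⟫‖ ^ 2 : ℝ) : ℂ) = ((‖x‖ ^ 2 : ℝ) : ℂ) := by
      push_cast
      push_cast at h
      rw [h, inner_self_eq_norm_sq_to_K]
      norm_cast
    exact_mod_cast h3
  -- trace via orthonormal basis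
  have htrace : ∀ (w : OrthonormalBasis (Fin n) ℂ V) (f : V →ₗ[ℂ] V),
      ∑ i, ⟪w i, f (w i)⟫ = LinearMap.trace ℂ V f := by
    intro w f
    rw [LinearMap.trace_eq_matrix_trace ℂ w.toBasis f, Matrix.trace]
    exact Finset.sum_congr rfl fun i _ => (hmat w f i i).symm
  -- Schur basis for fS
  obtain ⟨u, hu⟩ := schur_onb n V (by show finrank ℂ (EuclideanSpace ℂ (Fin n)) = n; simp) fS
  set T := LinearMap.toMatrix u.toBasis u.toBasis fS with hT
  set H := LinearMap.toMatrix u.toBasis u.toBasis fA with hH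
  set G := LinearMap.toMatrix u.toBasis u.toBasis fE with hG
  have hTHG : T = H + G := by rw [hT, hH, hG, hS, map_add]
  have hTtri : ∀ i j : Fin n, j < i → T i j = 0 := by
    intro i j hij; rw [hT, hmat]; exact hu i j hij
  -- eigen data of A
  have hA' : A.IsHermitian := hA
  set v := hA'.eigenvectorBasis with hv
  set μ := hA'.eigenvalues with hμ
  have hsym : ∀ x y : V, ⟪fA x, y⟫ = ⟪x, fA y⟫ := Matrix.isHermitian_iff_isSymmetric.1 hA'
  have hfAv : ∀ j, fA (v j) = (μ j : ℂ) • v j := by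
    intro j
    have h := hA'.mulVec_eigenvectorBasis j
    rw [hfA, Matrix.toEuclideanLin_apply]
    rw [hv, hμ]
    rw [h]
    ext i
    simp [Complex.real_smul]
  -- the permutations matching eigenvalues with lam and lam'
  have hprodm : ∀ (f : Fin n → ℂ), ∏ i, (X - C (f i))
      = (Multiset.map (fun a => X - C a) (Multiset.map f Finset.univ.val)).prod := by
    intro f; rw [Multiset.map_map]; rfl
  have hδ₂ : ∃ ρ : Equiv.Perm (Fin n), ∀ i, T i i = lam' (ρ i) := by
    have h1 : T.charpoly = ∏ i, (X - C (T i i)) := charpoly_of_triangular T hTtri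
    have h2 : T.charpoly = (A + E).charpoly := by
      rw [hT, LinearMap.charpoly_toMatrix fS u.toBasis, ← htm (A + E),
        LinearMap.charpoly_toMatrix]
    have h3 : ∏ i, (X - C (T i i)) = ∏ i, (X - C (lam' i)) := by
      rw [← h1, h2, hlam']
    have h5 := congrArg Polynomial.roots
      (((hprodm fun i => T i i).symm.trans h3).trans (hprodm lam'))
    rw [roots_multiset_prod_X_sub_C, roots_multiset_prod_X_sub_C] at h5
    exact exists_perm_comp' _ _ h5
  have hδ₁ : ∃ ρ : Equiv.Perm (Fin n), ∀ i, (μ i : ℂ) = lam (ρ i) := by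
    set Dm := LinearMap.toMatrix v.toBasis v.toBasis fA with hDm
    have hve : ∀ i j : Fin n, ⟪v i, v j⟫ = if i = j then (1:ℂ) else 0 :=
      orthonormal_iff_ite.1 v.orthonormal
    have hdm : ∀ i j, Dm i j = if i = j then (μ j : ℂ) else 0 := by
      intro i j
      rw [hDm, hmat, hfAv j, inner_smul_right, hve]
      split <;> simp
    have htri : ∀ i j : Fin n, j < i → Dm i j = 0 := by
      intro i j hij
      rw [hdm, if_neg (by exact fun h => absurd h.symm (ne_of_lt hij))]
    have h1 : Dm.charpoly = ∏ i, (X - C (Dm i i)) := charpoly_of_triangular Dm htri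
    have h2 : Dm.charpoly = A.charpoly := by
      rw [hDm, LinearMap.charpoly_toMatrix fA v.toBasis, ← htm A,
        LinearMap.charpoly_toMatrix]
    have hdd : ∀ i, Dm i i = (μ i : ℂ) := fun i => by rw [hdm, if_pos rfl]
    have h3 : ∏ i, (X - C ((μ i : ℂ))) = ∏ i, (X - C (lam i)) := by
      have e1 : ∏ i, (X - C ((μ i : ℂ))) = ∏ i, (X - C (Dm i i)) :=
        Finset.prod_congr rfl fun i _ => by rw [hdd i]
      rw [e1, ← h1, h2, hlam]
    have h5 := congrArg Polynomial.roots
      (((hprodm fun i => (μ i : ℂ)).symm.trans h3).trans (hprodm lam))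
    rw [roots_multiset_prod_X_sub_C, roots_multiset_prod_X_sub_C] at h5
    exact exists_perm_comp' _ _ h5
  obtain ⟨ρ₂, hρ₂⟩ := hδ₂
  obtain ⟨ρ₁, hρ₁⟩ := hδ₁
  -- doubly stochastic matrix and Birkhoff
  set D : Matrix (Fin n) (Fin n) ℝ := fun i j => ‖⟪v i, u j⟫‖ ^ 2 with hD
  have habs_symm : ∀ (x y : V), ‖⟪x, y⟫‖ = ‖⟪y, x⟫‖ := by
    intro x y
    rw [← inner_conj_symm x y, Complex.norm_conj]
  have hDS : D ∈ doublyStochastic ℝ (Fin n) := by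
    rw [mem_doublyStochastic_iff_sum]
    refine ⟨fun i j => by simp only [hD]; positivity, fun i => ?_, fun j => ?_⟩
    · have h := hpars u (v i)
      calc ∑ j, D i j = ∑ j, ‖⟪u j, v i⟫‖ ^ 2 := by
            refine Finset.sum_congr rfl fun j _ => ?_
            simp only [hD]
            rw [habs_symm]
        _ = ‖v i‖ ^ 2 := h
        _ = 1 := by rw [v.orthonormal.1 i]; norm_num
    · have h := hpars v (u j)
      calc ∑ i, D i j = ‖u j‖ ^ 2 := h
        _ = 1 := by rw [u.orthonormal.1 j]; norm_num
  -- cost function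
  set c : Fin n → Fin n → ℝ := fun i j => ‖T j j - (μ i : ℂ)‖ ^ 2 with hc
  have hbirk : ∃ σ : Equiv.Perm (Fin n), ∑ i, c i (σ i) ≤ ∑ i, ∑ j, D i j * c i j := by
    obtain ⟨wgt, hw0, hw1, hwD⟩ := exists_eq_sum_perm_of_mem_doublyStochastic hDS
    obtain ⟨σ₀, -, hmin⟩ := Finset.exists_min_image Finset.univ
      (fun σ : Equiv.Perm (Fin n) => ∑ i, c i (σ i)) ⟨1, Finset.mem_univ 1⟩
    refine ⟨σ₀, ?_⟩
    have hDexp : ∀ i j, D i j = ∑ σ : Equiv.Perm (Fin n), wgt σ * (σ.permMatrix ℝ i j) := by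
      intro i j
      rw [← hwD, Matrix.sum_apply]
      exact Finset.sum_congr rfl fun σ _ => rfl
    have hexp : ∑ i, ∑ j, D i j * c i j
        = ∑ σ : Equiv.Perm (Fin n), wgt σ * ∑ i, c i (σ i) := by
      calc ∑ i, ∑ j, D i j * c i j
          = ∑ i, ∑ j, ∑ σ : Equiv.Perm (Fin n), wgt σ * (σ.permMatrix ℝ i j) * c i j := by
            simp_rw [hDexp, Finset.sum_mul]
        _ = ∑ i, ∑ σ : Equiv.Perm (Fin n), ∑ j, wgt σ * (σ.permMatrix ℝ i j) * c i j :=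
            Finset.sum_congr rfl fun i _ => Finset.sum_comm
        _ = ∑ σ : Equiv.Perm (Fin n), ∑ i, ∑ j, wgt σ * (σ.permMatrix ℝ i j) * c i j :=
            Finset.sum_comm
        _ = ∑ σ : Equiv.Perm (Fin n), wgt σ * ∑ i, c i (σ i) := by
            refine Finset.sum_congr rfl fun σ _ => ?_
            rw [Finset.mul_sum]
            refine Finset.sum_congr rfl fun i _ => ?_
            simp [Equiv.Perm.permMatrix, PEquiv.toMatrix_apply, Equiv.toPEquiv_apply,
              mul_ite, ite_mul, Finset.sum_ite_eq, Finset.sum_ite_eq']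
    rw [hexp]
    calc ∑ i, c i (σ₀ i) = (∑ σ : Equiv.Perm (Fin n), wgt σ) * ∑ i, c i (σ₀ i) := by
          rw [hw1, one_mul]
      _ = ∑ σ : Equiv.Perm (Fin n), wgt σ * ∑ i, c i (σ₀ i) := Finset.sum_mul _ _ _
      _ ≤ ∑ σ : Equiv.Perm (Fin n), wgt σ * ∑ i, c i (σ i) :=
          Finset.sum_le_sum fun σ _ =>
            mul_le_mul_of_nonneg_left (hmin σ (Finset.mem_univ σ)) (hw0 σ)
  obtain ⟨σ₀, hσ₀⟩ := hbirk
  -- the key identity : ∑ D c = ∑_{ij} |H i j - δ_{ij} T j j|²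
  have hDc : ∑ i, ∑ j, D i j * c i j
      = ∑ i, ∑ j, ‖H i j - if i = j then T j j else 0‖ ^ 2 := by
    have hue : ∀ i j : Fin n, ⟪u i, u j⟫ = if i = j then (1:ℂ) else 0 :=
      orthonormal_iff_ite.1 u.orthonormal
    have hx : ∀ i j, D i j * c i j = ‖⟪v i, fA (u j) - T j j • u j⟫‖ ^ 2 := by
      intro i j
      have h2 : ⟪v i, fA (u j)⟫ = (μ i : ℂ) * ⟪v i, u j⟫ := by
        rw [← hsym (v i) (u j), hfAv i, inner_smul_left, Complex.conj_ofReal]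
      have h1 : ⟪v i, fA (u j) - T j j • u j⟫ = ((μ i : ℂ) - T j j) * ⟪v i, u j⟫ := by
        rw [inner_sub_right, inner_smul_right, h2]; ring
      rw [h1, norm_mul, mul_pow]
      simp only [hD, hc]
      rw [show ‖(μ i : ℂ) - T j j‖ = ‖T j j - (μ i : ℂ)‖ from
        norm_sub_rev _ _]
      ring
    have step1 : ∑ i, ∑ j, D i j * c i j = ∑ j, ‖fA (u j) - T j j • u j‖ ^ 2 := by
      rw [Finset.sum_comm]
      refine Finset.sum_congr rfl fun j _ => ?_
      rw [Finset.sum_congr rfl fun i _ => hx i j, hpars v _]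
    have step2 : ∀ j, ‖fA (u j) - T j j • u j‖ ^ 2
        = ∑ i, ‖H i j - if i = j then T j j else 0‖ ^ 2 := by
      intro j
      rw [← hpars u _]
      refine Finset.sum_congr rfl fun i _ => ?_
      have : ⟪u i, fA (u j) - T j j • u j⟫ = H i j - if i = j then T j j else 0 := by
        rw [inner_sub_right, inner_smul_right, hue, hH, hmat]
        split <;> simp
      rw [this]
    rw [step1, Finset.sum_congr rfl fun j _ => step2 j]
    exact Finset.sum_comm
  -- bound by 2 frobSq − diag part
  have hGfrob : ∑ i, ∑ j, ‖G i j‖ ^ 2 = frobSq E := by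
    set bf := EuclideanSpace.basisFun (Fin n) ℂ with hbf
    have hcolu : ∀ j, ∑ i, ‖G i j‖ ^ 2 = ‖fE (u j)‖ ^ 2 := by
      intro j
      have h := hpars u (fE (u j))
      refine Eq.trans (Finset.sum_congr rfl fun i _ => ?_) h
      rw [hG, hmat]
    have hEij : ∀ i j, E i j = ⟪bf i, fE (bf j)⟫ := by
      intro i j
      conv_lhs => rw [← htm E]
      exact hmat bf fE i j
    have hcolb : ∀ j, ∑ i, ‖E i j‖ ^ 2 = ‖fE (bf j)‖ ^ 2 := by
      intro j
      have h := hpars bf (fE (bf j))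
      refine Eq.trans (Finset.sum_congr rfl fun i _ => ?_) h
      rw [hEij]
    have hkey : ∀ w : OrthonormalBasis (Fin n) ℂ V, ∑ j, ((‖fE (w j)‖ : ℂ)) ^ 2
        = LinearMap.trace ℂ V (LinearMap.adjoint fE ∘ₗ fE) := by
      intro w
      rw [← htrace w]
      refine Finset.sum_congr rfl fun j _ => ?_
      rw [LinearMap.comp_apply, LinearMap.adjoint_inner_right, inner_self_eq_norm_sq_to_K]
      norm_cast
    have h2 : ∑ j, (‖fE (u j)‖ ^ 2 : ℝ) = ∑ j, (‖fE (bf j)‖ ^ 2 : ℝ) := by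
      have hcc := (hkey u).trans (hkey bf).symm
      exact_mod_cast hcc
    calc ∑ i, ∑ j, ‖G i j‖ ^ 2
        = ∑ j, ∑ i, ‖G i j‖ ^ 2 := Finset.sum_comm
      _ = ∑ j, ‖fE (u j)‖ ^ 2 := Finset.sum_congr rfl fun j _ => hcolu j
      _ = ∑ j, ‖fE (bf j)‖ ^ 2 := h2
      _ = ∑ j, ∑ i, ‖E i j‖ ^ 2 :=
          (Finset.sum_congr rfl fun j _ => hcolb j).symm
      _ = frobSq E := by rw [frobSq]; exact Finset.sum_comm
  have hGtr : ∑ i, G i i = Matrix.trace E := by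
    rw [hG]
    have : ∑ i, LinearMap.toMatrix u.toBasis u.toBasis fE i i
        = ∑ i, ⟪u i, fE (u i)⟫ := Finset.sum_congr rfl fun i _ => hmat u fE i i
    rw [this, htrace u fE, LinearMap.trace_eq_matrix_trace ℂ B fE, htm]
  have hMbound : ∑ i, ∑ j, ‖H i j - if i = j then T j j else 0‖ ^ 2
      ≤ 2 * frobSq E - ∑ i, ‖G i i‖ ^ 2 := by
    set a : Fin n → Fin n → ℝ := fun i j => ‖G i j‖ ^ 2 with ha
    have ha0 : ∀ i j, 0 ≤ a i j := fun i j => by simp only [ha]; positivity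
    have hHsym : ∀ i j, H i j = (starRingEnd ℂ) (H j i) := by
      intro i j
      simp only [hH, hmat u fA]
      rw [← inner_conj_symm (u i) (fA (u j))]
      exact congrArg _ (hsym (u j) (u i))
    have hHG : ∀ i j, j < i → H i j = - G i j := by
      intro i j hij
      have h0 := hTtri i j hij
      rw [hTHG, Matrix.add_apply] at h0
      linear_combination h0
    set m : Fin n × Fin n → ℝ := fun p =>
      if p.1 = p.2 then a p.1 p.1 else if p.2 < p.1 then a p.1 p.2 else a p.2 p.1 with hm
    have habs2 : ∀ i j, ‖H i j - if i = j then T j j else 0‖ ^ 2 = m (i, j) := by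
      intro i j
      simp only [hm]
      by_cases hij : i = j
      · subst hij
        rw [if_pos rfl, if_pos rfl]
        have hdiag : H i i - T i i = - G i i := by
          rw [hTHG, Matrix.add_apply]; ring
        rw [hdiag]
        simp only [ha, norm_neg]
      · rw [if_neg hij, if_neg hij, sub_zero]
        by_cases hji : j < i
        · rw [if_pos hji, hHG i j hji]
          simp only [ha, norm_neg]
        · have hij' : i < j := lt_of_le_of_ne (not_lt.1 hji) hij
          rw [if_neg hji, hHsym i j, hHG j i hij']
          simp only [ha, map_neg, norm_neg, Complex.norm_conj]
    set P := (Finset.univ ×ˢ Finset.univ : Finset (Fin n × Fin n)) with hP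
    set Pd := P.filter (fun p => p.1 = p.2) with hPd
    set Po := P.filter (fun p => ¬ p.1 = p.2) with hPo
    have hmemPo : ∀ p : Fin n × Fin n, p ∈ Po ↔ p.1 ≠ p.2 := by
      intro p
      simp [hPo, hP]
    have hsum1 : ∑ i, ∑ j, ‖H i j - if i = j then T j j else 0‖ ^ 2
        = ∑ p ∈ P, m p := by
      rw [hP, ← Finset.sum_product']
      exact Finset.sum_congr rfl fun p _ => habs2 p.1 p.2
    have hsum2 : frobSq E = ∑ p ∈ P, a p.1 p.2 := by
      rw [← hGfrob, hP, ← Finset.sum_product']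
    have hdm : ∑ p ∈ Pd, m p = ∑ i, ‖G i i‖ ^ 2 := by
      refine Finset.sum_nbij' (fun p => p.1) (fun i => (i, i)) ?_ ?_ ?_ ?_ ?_
      · intro p hp; exact Finset.mem_univ _
      · intro i _; simp [hPd, hP]
      · intro p hp
        have := (Finset.mem_filter.1 hp).2
        exact Prod.ext rfl this
      · intro i _; rfl
      · intro p hp
        have hpe := (Finset.mem_filter.1 hp).2
        simp only [hm, if_pos hpe, ha]
    have hda : ∑ p ∈ Pd, a p.1 p.2 = ∑ i, ‖G i i‖ ^ 2 := by
      refine Finset.sum_nbij' (fun p => p.1) (fun i => (i, i)) ?_ ?_ ?_ ?_ ?_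
      · intro p hp; exact Finset.mem_univ _
      · intro i _; simp [hPd, hP]
      · intro p hp
        have := (Finset.mem_filter.1 hp).2
        exact Prod.ext rfl this
      · intro i _; rfl
      · intro p hp
        have hpe := (Finset.mem_filter.1 hp).2
        simp only [ha]
        rw [hpe]
    have hswap : ∀ f : Fin n × Fin n → ℝ, ∑ p ∈ Po, f p = ∑ p ∈ Po, f (p.2, p.1) := by
      intro f
      refine Finset.sum_nbij' (fun p => (p.2, p.1)) (fun p => (p.2, p.1)) ?_ ?_ ?_ ?_ ?_
      · intro p hp; rw [hmemPo] at *; exact fun h => hp h.symm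
      · intro p hp; rw [hmemPo] at *; exact fun h => hp h.symm
      · intro p _; rfl
      · intro p _; rfl
      · intro p _; rfl
    have hpt : ∀ p ∈ Po, m p + m (p.2, p.1) ≤ 2 * (a p.1 p.2 + a p.2 p.1) := by
      intro p hp
      have hne : p.1 ≠ p.2 := (hmemPo p).1 hp
      have h1 := ha0 p.1 p.2
      have h2 := ha0 p.2 p.1
      by_cases hlt : p.2 < p.1
      · have : ¬ p.1 < p.2 := not_lt.2 (le_of_lt hlt)
        simp only [hm, if_neg hne, if_neg (Ne.symm hne), if_pos hlt, if_neg this]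
        linarith
      · have hlt' : p.1 < p.2 := lt_of_le_of_ne (not_lt.1 hlt) hne
        simp only [hm, if_neg hne, if_neg (Ne.symm hne), if_neg hlt, if_pos hlt']
        linarith
    have hoff : ∑ p ∈ Po, m p ≤ 2 * ∑ p ∈ Po, a p.1 p.2 := by
      have hdbl : 2 * ∑ p ∈ Po, m p = ∑ p ∈ Po, (m p + m (p.2, p.1)) := by
        rw [Finset.sum_add_distrib, two_mul, ← hswap m]
      have hub : ∑ p ∈ Po, (m p + m (p.2, p.1))
          ≤ ∑ p ∈ Po, 2 * (a p.1 p.2 + a p.2 p.1) := Finset.sum_le_sum hpt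
      have haa : ∑ p ∈ Po, 2 * (a p.1 p.2 + a p.2 p.1) = 4 * ∑ p ∈ Po, a p.1 p.2 := by
        have e1 : ∑ p ∈ Po, 2 * (a p.1 p.2 + a p.2 p.1)
            = ∑ p ∈ Po, 2 * a p.1 p.2 + ∑ p ∈ Po, 2 * a p.2 p.1 := by
          rw [← Finset.sum_add_distrib]
          exact Finset.sum_congr rfl fun p _ => by ring
        have e2 : ∑ p ∈ Po, 2 * a p.1 p.2 = ∑ p ∈ Po, 2 * a p.2 p.1 :=
          hswap (fun p => 2 * a p.1 p.2)
        rw [e1, ← e2, ← Finset.mul_sum]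
        ring
      linarith
    have hsplitm := Finset.sum_filter_add_sum_filter_not P (fun p => p.1 = p.2) m
    have hsplita := Finset.sum_filter_add_sum_filter_not P (fun p => p.1 = p.2)
      (fun p => a p.1 p.2)
    rw [hsum1, ← hsplitm]
    have hFr : frobSq E = (∑ i, ‖G i i‖ ^ 2) + ∑ p ∈ Po, a p.1 p.2 := by
      rw [hsum2, ← hsplita, ← hPd, ← hPo, hda]
    have hdm' : ∑ p ∈ Pd, m p = ∑ i, ‖G i i‖ ^ 2 := hdm
    have hoffnn : 0 ≤ ∑ p ∈ Po, a p.1 p.2 :=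
      Finset.sum_nonneg fun p _ => ha0 p.1 p.2
    rw [← hPd, ← hPo]
    linarith
  have hCS : ‖Matrix.trace E‖ ^ 2 ≤ (n : ℝ) * ∑ i, ‖G i i‖ ^ 2 := by
    have h1 : ‖Matrix.trace E‖ ≤ ∑ i, ‖G i i‖ := by
      rw [← hGtr]
      simpa using norm_sum_le Finset.univ (fun i => G i i)
    have h2 : (∑ i, ‖G i i‖) ^ 2 ≤ (n : ℝ) * ∑ i, ‖G i i‖ ^ 2 := by
      have h := Finset.sum_mul_sq_le_sq_mul_sq Finset.univ (fun _ => (1:ℝ))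
        (fun i => ‖G i i‖)
      simpa [Finset.card_univ] using h
    calc ‖Matrix.trace E‖ ^ 2 ≤ (∑ i, ‖G i i‖) ^ 2 :=
          pow_le_pow_left₀ (norm_nonneg _) h1 2
      _ ≤ (n : ℝ) * ∑ i, ‖G i i‖ ^ 2 := h2
  -- final permutation
  refine ⟨(ρ₁⁻¹ : Equiv.Perm (Fin n)).trans (σ₀.trans ρ₂), ?_⟩
  have hre : ∑ i, ‖lam' (ρ₂ (σ₀ (ρ₁⁻¹ i))) - lam i‖ ^ 2 = ∑ i, c i (σ₀ i) := by
    have hterm : ∀ k, c k (σ₀ k) = ‖lam' (ρ₂ (σ₀ k)) - lam (ρ₁ k)‖ ^ 2 := by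
      intro k
      simp only [hc]
      rw [hρ₂ (σ₀ k), hρ₁ k]
    calc ∑ i, ‖lam' (ρ₂ (σ₀ (ρ₁⁻¹ i))) - lam i‖ ^ 2
        = ∑ k, ‖lam' (ρ₂ (σ₀ (ρ₁⁻¹ (ρ₁ k)))) - lam (ρ₁ k)‖ ^ 2 :=
          (Equiv.sum_comp ρ₁ _).symm
      _ = ∑ k, c k (σ₀ k) := by
          refine Finset.sum_congr rfl fun k _ => ?_
          rw [show ρ₁⁻¹ (ρ₁ k) = k from ρ₁.symm_apply_apply k, hterm k]
  have hrhs : frobSq E + deltaSq E = 2 * frobSq E - (1 / (n : ℝ)) * ‖E.trace‖ ^ 2 := by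
    rw [deltaSq]; ring
  have hfinal : (1 / (n : ℝ)) * ‖E.trace‖ ^ 2 ≤ ∑ i, ‖G i i‖ ^ 2 := by
    rw [div_mul_eq_mul_div, one_mul, div_le_iff₀ (by positivity)]
    calc ‖E.trace‖ ^ 2 ≤ (n : ℝ) * ∑ i, ‖G i i‖ ^ 2 := hCS
    _ = (∑ i, ‖G i i‖ ^ 2) * n := by ring
  calc ∑ i, ‖lam' ((ρ₁⁻¹.trans (σ₀.trans ρ₂)) i) - lam i‖ ^ 2
      = ∑ i, c i (σ₀ i) := hre
    _ ≤ ∑ i, ∑ j, D i j * c i j := hσ₀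
    _ = ∑ i, ∑ j, ‖H i j - if i = j then T j j else 0‖ ^ 2 := hDc
    _ ≤ 2 * frobSq E - ∑ i, ‖G i i‖ ^ 2 := hMbound
    _ ≤ 2 * frobSq E - (1 / (n : ℝ)) * ‖E.trace‖ ^ 2 := by linarith
    _ = frobSq E + deltaSq E := hrhs.symm

end Main
end

section
/- Suppose ‖E_Q‖_F < 1 and n ≥ 1. Then n·(δ(E_Q)²/‖E_Q‖_F²)·‖E_Q‖_F^{2/m} + (1/n)|tr(E)|² ≤ n·‖E_Q‖_F^{2/m}, where δ(E_Q)² = ‖E_Q‖_F² − (1/n)|tr(E)|². Consequently, n(n−p+2√(n−p)δ(E_Q)+δ(E_Q)²/‖E_Q‖_F²)‖E_Q‖_F^{2/m} + (1/n)|tr(E)|² ≤ n(√(n−p)+1)²‖E_Q‖_F^{2/m}, i.e., the new bound of Theorem 3.1 is at most Song's bound n(√(n−p)+1)²‖E_Q‖_F^{2/m} when ‖E_Q‖_F < 1. -/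
open Matrix BigOperators

noncomputable def frobNorm {n : ℕ} (M : Matrix (Fin n) (Fin n) ℂ) : ℝ :=
  Real.sqrt (frobSq M)

noncomputable def delta {n : ℕ} (M : Matrix (Fin n) (Fin n) ℂ) : ℝ :=
  Real.sqrt (deltaSq M)

theorem stmt11 {n : ℕ} (hn : 1 ≤ n) (p : ℕ) (hp : 1 ≤ p) (hpn : p ≤ n)
    (m : ℕ) (hm : 1 ≤ m)
    (EQ E : Matrix (Fin n) (Fin n) ℂ) (hEQ : EQ ≠ 0)
    (htr : EQ.trace = E.trace) (hf : frobNorm EQ < 1) :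
    (n : ℝ) * (deltaSq EQ / frobNorm EQ ^ 2) * frobNorm EQ ^ ((2 : ℝ) / m) +
        (1 / (n : ℝ)) * ‖E.trace‖ ^ 2 ≤
      (n : ℝ) * frobNorm EQ ^ ((2 : ℝ) / m) ∧
    (n : ℝ) * (((n : ℝ) - p) + 2 * Real.sqrt ((n : ℝ) - p) * delta EQ +
          deltaSq EQ / frobNorm EQ ^ 2) * frobNorm EQ ^ ((2 : ℝ) / m) +
        (1 / (n : ℝ)) * ‖E.trace‖ ^ 2 ≤
      (n : ℝ) * (Real.sqrt ((n : ℝ) - p) + 1) ^ 2 * frobNorm EQ ^ ((2 : ℝ) / m) := by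
  have hfsq_nonneg : 0 ≤ frobSq EQ := by
    apply Finset.sum_nonneg; intro i _
    exact Finset.sum_nonneg fun j _ => sq_nonneg _
  have hfsq_pos : 0 < frobSq EQ := by
    rcases lt_or_eq_of_le hfsq_nonneg with h | h
    · exact h
    · exfalso; apply hEQ
      ext i j
      have := (Finset.sum_eq_zero_iff_of_nonneg
        (fun i _ => Finset.sum_nonneg fun j _ => sq_nonneg (‖EQ i j‖))).mp h.symm
      have := (Finset.sum_eq_zero_iff_of_nonneg
        (fun j _ => sq_nonneg (‖EQ i j‖))).mp (this i (Finset.mem_univ i)) j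
        (Finset.mem_univ j)
      have : ‖EQ i j‖ = 0 := by
        have := sq_eq_zero_iff.mp this; exact this
      simpa using norm_eq_zero.mp this
  set F := frobNorm EQ with hFdef
  have hF0 : 0 < F := Real.sqrt_pos.mpr hfsq_pos
  have hFsq : F ^ 2 = frobSq EQ := Real.sq_sqrt hfsq_nonneg
  set a := F ^ ((2 : ℝ) / m) with hadef
  have ha0 : 0 < a := Real.rpow_pos_of_pos hF0 _
  have hexp : (2 : ℝ) / m ≤ 2 := by
    have hm1 : (1 : ℝ) ≤ m := by exact_mod_cast hm
    rw [div_le_iff₀ (by linarith)]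
    nlinarith
  have haF : F ^ 2 ≤ a := by
    have := Real.rpow_le_rpow_of_exponent_ge hF0 hf.le hexp
    calc F ^ 2 = F ^ ((2 : ℝ) : ℝ) := by
          rw [← Real.rpow_natCast F 2]; norm_num
      _ ≤ a := this
  set T := (1 / (n : ℝ)) * ‖E.trace‖ ^ 2 with hTdef
  have hT0 : 0 ≤ T := by positivity
  have hdsq : deltaSq EQ = F ^ 2 - T := by
    rw [deltaSq, hFsq, htr]
  have hn1 : (1 : ℝ) ≤ n := by exact_mod_cast hn
  have hF2pos : (0 : ℝ) < F ^ 2 := by positivity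
  have h1 : (n : ℝ) * (deltaSq EQ / F ^ 2) * a + T ≤ (n : ℝ) * a := by
    rw [hdsq, sub_div, div_self (ne_of_gt hF2pos)]
    have key : T ≤ (n : ℝ) * (T / F ^ 2) * a := by
      have h2 : 1 ≤ a / F ^ 2 := (one_le_div hF2pos).mpr haF
      calc T = 1 * 1 * T := by ring
        _ ≤ (n : ℝ) * (a / F ^ 2) * T := by
            apply mul_le_mul (mul_le_mul hn1 h2 one_pos.le (by linarith)) le_rfl hT0
            positivity
        _ = (n : ℝ) * (T / F ^ 2) * a := by ring
    nlinarith
  refine ⟨h1, ?_⟩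
  have hdsq_le : deltaSq EQ ≤ 1 := by nlinarith
  have hd1 : delta EQ ≤ 1 := by
    rw [delta]
    calc Real.sqrt (deltaSq EQ) ≤ Real.sqrt 1 := Real.sqrt_le_sqrt hdsq_le
      _ = 1 := Real.sqrt_one
  have hd0 : 0 ≤ delta EQ := Real.sqrt_nonneg _
  have hs0 : 0 ≤ Real.sqrt ((n : ℝ) - p) := Real.sqrt_nonneg _
  have hssq : Real.sqrt ((n : ℝ) - p) ^ 2 = (n : ℝ) - p := by
    apply Real.sq_sqrt
    have : (p : ℝ) ≤ n := by exact_mod_cast hpn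
    linarith
  have hexp2 : (Real.sqrt ((n : ℝ) - p) + 1) ^ 2
      = ((n : ℝ) - p) + 2 * Real.sqrt ((n : ℝ) - p) + 1 := by
    rw [add_sq, hssq]; ring
  rw [hexp2]
  nlinarith [mul_nonneg (mul_nonneg (by linarith : (0:ℝ) ≤ (n:ℝ))
    (mul_nonneg hs0 (by linarith : (0:ℝ) ≤ 1 - delta EQ))) ha0.le]
end
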